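/- arXiv:2509.22531 — 6 statements merged into one kernel-verified Lean document; each statement's English description precedes it below -/
import Mathlib

section
/- Fix x̄ ∈ {0,1}. Then E[ξ_x̄(Z,X,C)·Y] = E[π_x̄(X,C)·r(Z,C)] = E[s_x̄(X,C)] = E[τ_x̄(C)], i.e. all three reweighted expectations equal the expectation of the conditional front-door functional τ_x̄(C). -/
open MeasureTheory
open scoped ENNReal

noncomputable section

section Aux

variable {Ω : Type*} {F : MeasurableSpace Ω} {P : Measure Ω} [IsProbabilityMeasure P]

lemma fd_meas_comp {β : Type*} [MeasurableSpace β] {T : Ω → β} {φ : β → ℝ}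
    (hφ : Measurable φ) :
    StronglyMeasurable[MeasurableSpace.comap T inferInstance] (fun ω => φ (T ω)) :=
  (hφ.comp (Measurable.of_comap_le le_rfl)).stronglyMeasurable

lemma fd_pullout {G : MeasurableSpace Ω} (hG : G ≤ F) {f g h : Ω → ℝ}
    (hf : StronglyMeasurable[G] f) (hfg : Integrable (fun ω => f ω * g ω) P)
    (hg : Integrable g P) (hh : (fun ω => h ω) =ᵐ[P] P[g|G]) :
    ∫ ω, f ω * g ω ∂P = ∫ ω, f ω * h ω ∂P := by
  have h1 : P[fun ω => f ω * g ω|G] =ᵐ[P] fun ω => f ω * (P[g|G]) ω :=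
    condExp_mul_of_stronglyMeasurable_left hf hfg hg
  calc ∫ ω, f ω * g ω ∂P = ∫ ω, (P[fun ω => f ω * g ω|G]) ω ∂P :=
        (integral_condExp hG).symm
    _ = ∫ ω, f ω * (P[g|G]) ω ∂P := integral_congr_ae h1
    _ = ∫ ω, f ω * h ω ∂P := by
        refine integral_congr_ae ?_
        filter_upwards [hh] with ω hω
        rw [hω]

lemma fd_integrable_of_mul {G : MeasurableSpace Ω} (hG : G ≤ F) {f g h : Ω → ℝ} {δ : ℝ}
    (hδ : 0 < δ) (hf : StronglyMeasurable[G] f) (hf0 : ∀ ω, 0 ≤ f ω)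
    (hfg : Integrable (fun ω => f ω * g ω) P) (hg : Integrable g P)
    (hh : (fun ω => h ω) =ᵐ[P] P[g|G]) (hhδ : ∀ ω, δ ≤ h ω) :
    Integrable f P := by
  have h1 : P[fun ω => f ω * g ω|G] =ᵐ[P] fun ω => f ω * (P[g|G]) ω :=
    condExp_mul_of_stronglyMeasurable_left hf hfg hg
  have h2 : Integrable (fun ω => f ω * h ω) P := by
    refine (integrable_condExp (m := G) (f := fun ω => f ω * g ω) (μ := P)).congr ?_
    filter_upwards [h1, hh] with ω h1ω hhω
    rw [h1ω, ← hhω]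
  refine Integrable.mono' (h2.const_mul δ⁻¹) ((hf.mono hG).aestronglyMeasurable) ?_
  refine ae_of_all _ fun ω => ?_
  rw [Real.norm_eq_abs, abs_of_nonneg (hf0 ω)]
  rw [inv_mul_eq_div, le_div_iff₀ hδ]
  nlinarith [hf0 ω, hhδ ω]

lemma fd_abs_div_le {δ a b : ℝ} (hδ : 0 < δ) (ha1 : δ ≤ a) (ha2 : a ≤ 1 - δ) (hb : δ ≤ b) :
    |a / b| ≤ (1 - δ) / δ := by
  have hb0 : 0 < b := lt_of_lt_of_le hδ hb
  rw [abs_of_nonneg (div_nonneg (le_trans hδ.le ha1) hb0.le)]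
  exact div_le_div₀ (by linarith) ha2 hδ hb

end Aux

variable {𝒞 : Type*}

/-- ξ_x̄(z,x,c) = q(z,x̄,c)/q(z,x,c). -/
def fdXi (q : ℝ → ℝ → 𝒞 → ℝ) (xb z x : ℝ) (c : 𝒞) : ℝ := q z xb c / q z x c

/-- π_x̄(x,c) = 1{x = x̄}/e(x,c). -/
def fdPi (e : ℝ → 𝒞 → ℝ) (xb x : ℝ) (c : 𝒞) : ℝ := (if x = xb then (1 : ℝ) else 0) / e x c

/-- r(z,c) = Σ_{x∈{0,1}} m(z,x,c)·e(x,c). -/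
def fdR (m : ℝ → ℝ → 𝒞 → ℝ) (e : ℝ → 𝒞 → ℝ) (z : ℝ) (c : 𝒞) : ℝ :=
  m z 0 c * e 0 c + m z 1 c * e 1 c

/-- ν_{m q e}(x,c) = Σ_{z∈{0,1}} r(z,c)·q(z,x,c). -/
def fdNu (m : ℝ → ℝ → 𝒞 → ℝ) (q : ℝ → ℝ → 𝒞 → ℝ) (e : ℝ → 𝒞 → ℝ) (x : ℝ) (c : 𝒞) : ℝ :=
  fdR m e 0 c * q 0 x c + fdR m e 1 c * q 1 x c

/-- s_x̄(x,c) = Σ_{z∈{0,1}} m(z,x,c)·q(z,x̄,c). -/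
def fdS (m q : ℝ → ℝ → 𝒞 → ℝ) (xb x : ℝ) (c : 𝒞) : ℝ :=
  m 0 x c * q 0 xb c + m 1 x c * q 1 xb c

/-- τ_x̄(c) = Σ_{z,x∈{0,1}} m(z,x,c)·q(z,x̄,c)·e(x,c). -/
def fdTau (m q : ℝ → ℝ → 𝒞 → ℝ) (e : ℝ → 𝒞 → ℝ) (xb : ℝ) (c : 𝒞) : ℝ :=
  m 0 0 c * q 0 xb c * e 0 c + m 0 1 c * q 0 xb c * e 1 c +
    m 1 0 c * q 1 xb c * e 0 c + m 1 1 c * q 1 xb c * e 1 c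

/-- Front-door pseudo-outcome φ_x̄ built from a nuisance triple (m,e,q). -/
def fdPhi (m : ℝ → ℝ → 𝒞 → ℝ) (e : ℝ → 𝒞 → ℝ) (q : ℝ → ℝ → 𝒞 → ℝ) (xb : ℝ)
    (z x : ℝ) (c : 𝒞) (y : ℝ) : ℝ :=
  fdXi q xb z x c * (y - m z x c) + fdPi e xb x c * (fdR m e z c - fdNu m q e x c) +
    fdS m q xb x c

/-- **Expressiveness of nuisances.** For x̄ ∈ {0,1},
E[ξ_x̄(Z,X,C)·Y] = E[π_x̄(X,C)·r(Z,C)] = E[s_x̄(X,C)] = E[τ_x̄(C)]. -/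
theorem fd_expressiveness
    {Ω : Type*} [MeasurableSpace Ω] [MeasurableSpace 𝒞]
    (P : Measure Ω) [IsProbabilityMeasure P]
    (C : Ω → 𝒞) (X Z Y : Ω → ℝ)
    (hC : Measurable C) (hX : Measurable X) (hZ : Measurable Z) (hY : Measurable Y)
    (hX01 : ∀ ω, X ω = 0 ∨ X ω = 1) (hZ01 : ∀ ω, Z ω = 0 ∨ Z ω = 1)
    (hY2 : MemLp Y 2 P)
    (m : ℝ → ℝ → 𝒞 → ℝ) (e : ℝ → 𝒞 → ℝ) (q : ℝ → ℝ → 𝒞 → ℝ)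
    (hm_meas : Measurable fun p : ℝ × ℝ × 𝒞 => m p.1 p.2.1 p.2.2)
    (he_meas : Measurable fun p : ℝ × 𝒞 => e p.1 p.2)
    (hq_meas : Measurable fun p : ℝ × ℝ × 𝒞 => q p.1 p.2.1 p.2.2)
    (hm : (fun ω => m (Z ω) (X ω) (C ω))
        =ᵐ[P] P[Y | MeasurableSpace.comap (fun ω => (Z ω, X ω, C ω)) inferInstance])
    (he1 : (fun ω => e 1 (C ω)) =ᵐ[P] P[X | MeasurableSpace.comap C inferInstance])
    (he0 : ∀ c, e 0 c = 1 - e 1 c)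
    (hq1 : (fun ω => q 1 (X ω) (C ω))
        =ᵐ[P] P[Z | MeasurableSpace.comap (fun ω => (X ω, C ω)) inferInstance])
    (hq0 : ∀ x c, q 0 x c = 1 - q 1 x c)
    (δ : ℝ) (hδ0 : 0 < δ) (hδ2 : δ < 1 / 2)
    (he_pos : ∀ x c, (x = 0 ∨ x = 1) → δ ≤ e x c ∧ e x c ≤ 1 - δ)
    (hq_pos : ∀ z x c, (z = 0 ∨ z = 1) → (x = 0 ∨ x = 1) → δ ≤ q z x c ∧ q z x c ≤ 1 - δ)
    (xb : ℝ) (hxb : xb = 0 ∨ xb = 1) :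
    (∫ ω, fdXi q xb (Z ω) (X ω) (C ω) * Y ω ∂P)
        = (∫ ω, fdPi e xb (X ω) (C ω) * fdR m e (Z ω) (C ω) ∂P) ∧
      (∫ ω, fdPi e xb (X ω) (C ω) * fdR m e (Z ω) (C ω) ∂P)
        = (∫ ω, fdS m q xb (X ω) (C ω) ∂P) ∧
      (∫ ω, fdS m q xb (X ω) (C ω) ∂P) = (∫ ω, fdTau m q e xb (C ω) ∂P) := by
  classical
  have hq_ne : ∀ z x c, (z = 0 ∨ z = 1) → (x = 0 ∨ x = 1) → q z x c ≠ 0 :=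
    fun z x c hz hx => ne_of_gt (lt_of_lt_of_le hδ0 (hq_pos z x c hz hx).1)
  have he_ne : ∀ x c, (x = 0 ∨ x = 1) → e x c ≠ 0 :=
    fun x c hx => ne_of_gt (lt_of_lt_of_le hδ0 (he_pos x c hx).1)
  have hG1 := hC.comap_le
  have hG2 := (hX.prodMk hC).comap_le
  have hG3 := (hZ.prodMk (hX.prodMk hC)).comap_le
  -- curried measurability facts
  have hmc : ∀ z x : ℝ, Measurable fun c : 𝒞 => m z x c := fun z x =>
    hm_meas.comp (measurable_const.prodMk (measurable_const.prodMk measurable_id))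
  have hqc : ∀ z x : ℝ, Measurable fun c : 𝒞 => q z x c := fun z x =>
    hq_meas.comp (measurable_const.prodMk (measurable_const.prodMk measurable_id))
  have hec : ∀ x : ℝ, Measurable fun c : 𝒞 => e x c := fun x =>
    he_meas.comp (measurable_const.prodMk measurable_id)
  have hmxc : ∀ z : ℝ, Measurable fun p : ℝ × 𝒞 => m z p.1 p.2 := fun z =>
    hm_meas.comp (measurable_const.prodMk measurable_id)
  have hqxc : ∀ z : ℝ, Measurable fun p : ℝ × 𝒞 => q z p.1 p.2 := fun z =>
    hq_meas.comp (measurable_const.prodMk measurable_id)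
  have hqxbc : Measurable fun p : ℝ × ℝ × 𝒞 => q p.1 xb p.2.2 :=
    hq_meas.comp (measurable_fst.prodMk (measurable_const.prodMk measurable_snd.snd))
  -- basic integrability
  have hYint : Integrable Y P := hY2.integrable one_le_two
  have hmpath : Integrable (fun ω => m (Z ω) (X ω) (C ω)) P := integrable_condExp.congr hm.symm
  have hZint : Integrable Z P := by
    refine Integrable.mono' (integrable_const 1) hZ.aestronglyMeasurable
      (ae_of_all _ fun ω => ?_)
    rcases hZ01 ω with h | h <;> rw [h] <;> norm_num
  have hXint : Integrable X P := by
    refine Integrable.mono' (integrable_const 1) hX.aestronglyMeasurable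
      (ae_of_all _ fun ω => ?_)
    rcases hX01 ω with h | h <;> rw [h] <;> norm_num
  -- indicator functions
  have hIZm : ∀ z : ℝ, Measurable fun ω => 1 - |Z ω - z| := fun z =>
    measurable_const.sub (hZ.sub measurable_const).abs
  have hIXm : ∀ x : ℝ, Measurable fun ω => 1 - |X ω - x| := fun x =>
    measurable_const.sub (hX.sub measurable_const).abs
  have hIZrange : ∀ z, (z = 0 ∨ z = 1) → ∀ ω, 0 ≤ 1 - |Z ω - z| ∧ 1 - |Z ω - z| ≤ 1 := by
    intro z hz ω
    rcases hz with rfl | rfl <;> rcases hZ01 ω with h | h <;> rw [h] <;> norm_num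
  have hIXrange : ∀ x, (x = 0 ∨ x = 1) → ∀ ω, 0 ≤ 1 - |X ω - x| ∧ 1 - |X ω - x| ≤ 1 := by
    intro x hx ω
    rcases hx with rfl | rfl <;> rcases hX01 ω with h | h <;> rw [h] <;> norm_num
  have hIZabs : ∀ z, (z = 0 ∨ z = 1) → ∀ ω, abs (1 - |Z ω - z|) ≤ 1 := by
    intro z hz ω
    have h := hIZrange z hz ω
    rw [abs_of_nonneg h.1]; exact h.2
  have hIXabs : ∀ x, (x = 0 ∨ x = 1) → ∀ ω, abs (1 - |X ω - x|) ≤ 1 := by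
    intro x hx ω
    have h := hIXrange x hx ω
    rw [abs_of_nonneg h.1]; exact h.2
  have hIZint : ∀ z, (z = 0 ∨ z = 1) → Integrable (fun ω => 1 - |Z ω - z|) P := by
    intro z hz
    refine Integrable.mono' (integrable_const 1) (hIZm z).aestronglyMeasurable
      (ae_of_all _ fun ω => ?_)
    simpa [Real.norm_eq_abs] using hIZabs z hz ω
  have hIXint : ∀ x, (x = 0 ∨ x = 1) → Integrable (fun ω => 1 - |X ω - x|) P := by
    intro x hx
    refine Integrable.mono' (integrable_const 1) (hIXm x).aestronglyMeasurable
      (ae_of_all _ fun ω => ?_)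
    simpa [Real.norm_eq_abs] using hIXabs x hx ω
  -- product with a bounded factor on the right is integrable
  have mul_bdd : ∀ f : Ω → ℝ, Integrable f P → ∀ g : Ω → ℝ, AEStronglyMeasurable g P →
      ∀ c : ℝ, (∀ ω, |g ω| ≤ c) → Integrable (fun ω => f ω * g ω) P := by
    intro f hf g hg c hgb
    refine (Integrable.bdd_mul (c := c) hf hg (ae_of_all _ fun ω => by
      simpa [Real.norm_eq_abs] using hgb ω)).congr (ae_of_all _ fun ω => mul_comm _ _)
  -- conditional expectations of indicators
  have hcondZ : ∀ z, z = 0 ∨ z = 1 →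
      (fun ω => q z (X ω) (C ω)) =ᵐ[P] P[fun ω => 1 - abs (Z ω - z)|(MeasurableSpace.comap (fun ω => (X ω, C ω)) inferInstance)] := by
    intro z hz
    rcases hz with rfl | rfl
    · have h1 : (fun ω => 1 - |Z ω - 0|) =ᵐ[P] (fun _ => (1 : ℝ)) - Z :=
        ae_of_all _ fun ω => by rcases hZ01 ω with h | h <;> simp [h]
      have h2 := condExp_sub (μ := P) (m := (MeasurableSpace.comap (fun ω => (X ω, C ω)) inferInstance)) (integrable_const (1 : ℝ)) hZint
      have h3 := condExp_const (μ := P) hG2 (1 : ℝ)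
      refine Filter.EventuallyEq.trans ?_ (condExp_congr_ae h1).symm
      filter_upwards [h2, hq1] with ω h2ω h1ω
      rw [hq0, h1ω, h2ω]
      simp [h3]
    · have h1 : (fun ω => 1 - |Z ω - 1|) =ᵐ[P] Z :=
        ae_of_all _ fun ω => by rcases hZ01 ω with h | h <;> simp [h]
      exact hq1.trans (condExp_congr_ae h1).symm
  have hcondX : ∀ x, x = 0 ∨ x = 1 →
      (fun ω => e x (C ω)) =ᵐ[P] P[fun ω => 1 - abs (X ω - x)|(MeasurableSpace.comap C inferInstance)] := by
    intro x hx
    rcases hx with rfl | rfl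
    · have h1 : (fun ω => 1 - |X ω - 0|) =ᵐ[P] (fun _ => (1 : ℝ)) - X :=
        ae_of_all _ fun ω => by rcases hX01 ω with h | h <;> simp [h]
      have h2 := condExp_sub (μ := P) (m := (MeasurableSpace.comap C inferInstance)) (integrable_const (1 : ℝ)) hXint
      have h3 := condExp_const (μ := P) hG1 (1 : ℝ)
      refine Filter.EventuallyEq.trans ?_ (condExp_congr_ae h1).symm
      filter_upwards [h2, he1] with ω h2ω h1ω
      rw [he0, h1ω, h2ω]
      simp [h3]
    · have h1 : (fun ω => 1 - |X ω - 1|) =ᵐ[P] X :=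
        ae_of_all _ fun ω => by rcases hX01 ω with h | h <;> simp [h]
      exact he1.trans (condExp_congr_ae h1).symm
  have hqδ : ∀ z, (z = 0 ∨ z = 1) → ∀ ω, δ ≤ q z (X ω) (C ω) :=
    fun z hz ω => (hq_pos z (X ω) (C ω) hz (hX01 ω)).1
  have heδ : ∀ x, (x = 0 ∨ x = 1) → ∀ ω, δ ≤ e x (C ω) :=
    fun x hx ω => (he_pos x (C ω) hx).1
  have hqabs1 : ∀ z x c, (z = 0 ∨ z = 1) → (x = 0 ∨ x = 1) → |q z x c| ≤ 1 := by
    intro z x c hz hx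
    have h := hq_pos z x c hz hx
    rw [abs_of_nonneg (le_trans hδ0.le h.1)]; linarith
  have heabs1 : ∀ x c, (x = 0 ∨ x = 1) → |e x c| ≤ 1 := by
    intro x c hx
    have h := he_pos x c hx
    rw [abs_of_nonneg (le_trans hδ0.le h.1)]; linarith
  -- integrability of m z x (C ·)
  have hMint : ∀ z x, (z = 0 ∨ z = 1) → (x = 0 ∨ x = 1) →
      Integrable (fun ω => m z x (C ω)) P := by
    intro z x hz hx
    have key1 : Integrable (fun ω => (1 - |X ω - x|) * |m z x (C ω)|) P := by
      refine fd_integrable_of_mul hG2 hδ0 (g := fun ω => 1 - |Z ω - z|)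
        (h := fun ω => q z (X ω) (C ω)) ?_ ?_ ?_ (hIZint z hz) (hcondZ z hz) (hqδ z hz)
      · exact fd_meas_comp (T := fun ω => (X ω, C ω))
          (φ := fun p : ℝ × 𝒞 => (1 - |p.1 - x|) * |m z x p.2|)
          ((measurable_const.sub (measurable_fst.sub measurable_const).abs).mul
            (((hmc z x).comp measurable_snd).abs))
      · exact fun ω => mul_nonneg (hIXrange x hx ω).1 (abs_nonneg _)
      · have hptw : ∀ ω, ((1 - |X ω - x|) * |m z x (C ω)|) * (1 - |Z ω - z|)
            = |m (Z ω) (X ω) (C ω)| * ((1 - |X ω - x|) * (1 - |Z ω - z|)) := by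
          intro ω
          rcases hz with rfl | rfl <;> rcases hx with rfl | rfl <;>
            rcases hZ01 ω with h1 | h1 <;> rcases hX01 ω with h2 | h2 <;>
            rw [h1, h2] <;> norm_num <;> ring
        refine (mul_bdd _ hmpath.abs (fun ω => (1 - |X ω - x|) * (1 - |Z ω - z|))
          ((hIXm x).mul (hIZm z)).aestronglyMeasurable 1 (fun ω => ?_)).congr
          (ae_of_all _ fun ω => (hptw ω).symm)
        rw [abs_mul]
        calc abs (1 - |X ω - x|) * abs (1 - |Z ω - z|) ≤ 1 * 1 :=
              mul_le_mul (hIXabs x hx ω) (hIZabs z hz ω) (abs_nonneg _) zero_le_one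
          _ = 1 := one_mul 1
    have key2 : Integrable (fun ω => |m z x (C ω)|) P := by
      refine fd_integrable_of_mul hG1 hδ0 (g := fun ω => 1 - |X ω - x|)
        (h := fun ω => e x (C ω)) ?_ (fun ω => abs_nonneg _) ?_ (hIXint x hx)
        (hcondX x hx) (heδ x hx)
      · exact fd_meas_comp (T := C) (φ := fun c => |m z x c|) (hmc z x).abs
      · exact key1.congr (ae_of_all _ fun ω => mul_comm _ _)
    refine (integrable_norm_iff ((hmc z x).comp hC).aestronglyMeasurable).mp
      (key2.congr (ae_of_all _ fun ω => (Real.norm_eq_abs _).symm))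
  have hMcomb : ∀ z, (z = 0 ∨ z = 1) → Integrable (fun ω => m z (X ω) (C ω)) P := by
    intro z hz
    have h0 := mul_bdd _ (hMint z 0 hz (Or.inl rfl)) (fun ω => 1 - |X ω - 0|)
      (hIXm 0).aestronglyMeasurable 1 (hIXabs 0 (Or.inl rfl))
    have h1 := mul_bdd _ (hMint z 1 hz (Or.inr rfl)) (fun ω => 1 - |X ω - 1|)
      (hIXm 1).aestronglyMeasurable 1 (hIXabs 1 (Or.inr rfl))
    refine (h0.add h1).congr (ae_of_all _ fun ω => ?_)
    simp only [Pi.add_apply]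
    rcases hX01 ω with h | h <;> norm_num [h]
  -- ξ and π : measurability and bounds
  have hξφ3 : Measurable fun p : ℝ × ℝ × 𝒞 => fdXi q xb p.1 p.2.1 p.2.2 := by
    simp only [fdXi]; exact hqxbc.div hq_meas
  have hξφ2 : ∀ z : ℝ, Measurable fun p : ℝ × 𝒞 => fdXi q xb z p.1 p.2 := by
    intro z; simp only [fdXi]
    exact ((hqc z xb).comp measurable_snd).div (hqxc z)
  have hξb : ∀ z x c, (z = 0 ∨ z = 1) → (x = 0 ∨ x = 1) →
      |fdXi q xb z x c| ≤ (1 - δ) / δ := by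
    intro z x c hz hx
    have h1 := hq_pos z xb c hz hxb
    have h2 := hq_pos z x c hz hx
    simpa only [fdXi] using fd_abs_div_le hδ0 h1.1 h1.2 h2.1
  have hπφ : Measurable fun p : ℝ × 𝒞 => fdPi e xb p.1 p.2 := by
    simp only [fdPi]
    exact (Measurable.ite (measurable_fst (measurableSet_singleton xb)) measurable_const
      measurable_const).div he_meas
  have hπxc : ∀ x : ℝ, Measurable fun c : 𝒞 => fdPi e xb x c := by
    intro x; simp only [fdPi]; exact measurable_const.div (hec x)
  have hπb : ∀ x c, (x = 0 ∨ x = 1) → |fdPi e xb x c| ≤ 1 / δ := by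
    intro x c hx
    have h := he_pos x c hx
    have h1 : |(if x = xb then (1 : ℝ) else 0)| ≤ 1 := by split_ifs <;> norm_num
    have h2 : δ ≤ |e x c| := le_trans h.1 (le_abs_self _)
    simp only [fdPi, abs_div]
    exact div_le_div₀ zero_le_one h1 hδ0 h2
  -- Part A : ∫ ξ Y = ∫ s(X,C)
  have hξmeas3 : StronglyMeasurable[MeasurableSpace.comap (fun ω => (Z ω, X ω, C ω))
      inferInstance] fun ω => fdXi q xb (Z ω) (X ω) (C ω) :=
    fd_meas_comp (T := fun ω => (Z ω, X ω, C ω)) hξφ3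
  have hξYint : Integrable (fun ω => fdXi q xb (Z ω) (X ω) (C ω) * Y ω) P := by
    refine Integrable.bdd_mul (c := (1 - δ) / δ) hYint (hξmeas3.mono hG3).aestronglyMeasurable
      (ae_of_all _ fun ω => ?_)
    simpa [Real.norm_eq_abs] using hξb (Z ω) (X ω) (C ω) (hZ01 ω) (hX01 ω)
  have stepA1 : ∫ ω, fdXi q xb (Z ω) (X ω) (C ω) * Y ω ∂P
      = ∫ ω, fdXi q xb (Z ω) (X ω) (C ω) * m (Z ω) (X ω) (C ω) ∂P :=
    fd_pullout hG3 hξmeas3 hξYint hYint hm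
  have hFint : ∀ z, (z = 0 ∨ z = 1) →
      Integrable (fun ω => fdXi q xb z (X ω) (C ω) * m z (X ω) (C ω)) P := by
    intro z hz
    refine Integrable.bdd_mul (c := (1 - δ) / δ) (hMcomb z hz)
      ((hξφ2 z).comp (hX.prodMk hC)).aestronglyMeasurable (ae_of_all _ fun ω => ?_)
    simpa [Real.norm_eq_abs] using hξb z (X ω) (C ω) hz (hX01 ω)
  have hFIZint : ∀ z, (z = 0 ∨ z = 1) →
      Integrable (fun ω => (fdXi q xb z (X ω) (C ω) * m z (X ω) (C ω)) * (1 - |Z ω - z|)) P :=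
    fun z hz => mul_bdd _ (hFint z hz) _ (hIZm z).aestronglyMeasurable 1 (hIZabs z hz)
  have stepA2 : ∫ ω, fdXi q xb (Z ω) (X ω) (C ω) * m (Z ω) (X ω) (C ω) ∂P
      = (∫ ω, (fdXi q xb 0 (X ω) (C ω) * m 0 (X ω) (C ω)) * (1 - |Z ω - 0|) ∂P)
        + ∫ ω, (fdXi q xb 1 (X ω) (C ω) * m 1 (X ω) (C ω)) * (1 - |Z ω - 1|) ∂P := by
    rw [← integral_add (hFIZint 0 (Or.inl rfl)) (hFIZint 1 (Or.inr rfl))]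
    refine integral_congr_ae (ae_of_all _ fun ω => ?_)
    rcases hZ01 ω with h | h <;> norm_num [h]
  have stepA3 : ∀ z, (z = 0 ∨ z = 1) →
      ∫ ω, (fdXi q xb z (X ω) (C ω) * m z (X ω) (C ω)) * (1 - |Z ω - z|) ∂P
        = ∫ ω, m z (X ω) (C ω) * q z xb (C ω) ∂P := by
    intro z hz
    refine Eq.trans (fd_pullout hG2 (fd_meas_comp (T := fun ω => (X ω, C ω))
      (φ := fun p : ℝ × 𝒞 => fdXi q xb z p.1 p.2 * m z p.1 p.2) ((hξφ2 z).mul (hmxc z)))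
      (hFIZint z hz) (hIZint z hz) (hcondZ z hz)) ?_
    refine integral_congr_ae (ae_of_all _ fun ω => ?_)
    have hne := hq_ne z (X ω) (C ω) hz (hX01 ω)
    have hcan : fdXi q xb z (X ω) (C ω) * q z (X ω) (C ω) = q z xb (C ω) := by
      simp only [fdXi]; exact div_mul_cancel₀ _ hne
    beta_reduce
    rw [mul_right_comm, hcan, mul_comm]
  have hMqint : ∀ z, (z = 0 ∨ z = 1) →
      Integrable (fun ω => m z (X ω) (C ω) * q z xb (C ω)) P :=
    fun z hz => mul_bdd _ (hMcomb z hz) _ ((hqc z xb).comp hC).aestronglyMeasurable 1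
      (fun ω => hqabs1 z xb (C ω) hz hxb)
  have stepA4 : (∫ ω, m 0 (X ω) (C ω) * q 0 xb (C ω) ∂P)
      + (∫ ω, m 1 (X ω) (C ω) * q 1 xb (C ω) ∂P) = ∫ ω, fdS m q xb (X ω) (C ω) ∂P := by
    rw [← integral_add (hMqint 0 (Or.inl rfl)) (hMqint 1 (Or.inr rfl))]
    exact integral_congr_ae (ae_of_all _ fun ω => by simp [fdS])
  have hA : ∫ ω, fdXi q xb (Z ω) (X ω) (C ω) * Y ω ∂P
      = ∫ ω, fdS m q xb (X ω) (C ω) ∂P := by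
    rw [stepA1, stepA2, stepA3 0 (Or.inl rfl), stepA3 1 (Or.inr rfl), stepA4]
  -- Part C : ∫ s(X,C) = ∫ τ
  have hScmeas : ∀ x : ℝ, Measurable fun c : 𝒞 => fdS m q xb x c := by
    intro x; simp only [fdS]
    exact ((hmc 0 x).mul (hqc 0 xb)).add ((hmc 1 x).mul (hqc 1 xb))
  have hScint : ∀ x, (x = 0 ∨ x = 1) → Integrable (fun ω => fdS m q xb x (C ω)) P := by
    intro x hx
    have h0 := mul_bdd _ (hMint 0 x (Or.inl rfl) hx) _
      ((hqc 0 xb).comp hC).aestronglyMeasurable 1 (fun ω => hqabs1 0 xb (C ω) (Or.inl rfl) hxb)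
    have h1 := mul_bdd _ (hMint 1 x (Or.inr rfl) hx) _
      ((hqc 1 xb).comp hC).aestronglyMeasurable 1 (fun ω => hqabs1 1 xb (C ω) (Or.inr rfl) hxb)
    exact (h0.add h1).congr (ae_of_all _ fun ω => by simp [fdS])
  have hSIXint : ∀ x, (x = 0 ∨ x = 1) →
      Integrable (fun ω => fdS m q xb x (C ω) * (1 - |X ω - x|)) P :=
    fun x hx => mul_bdd _ (hScint x hx) _ (hIXm x).aestronglyMeasurable 1 (hIXabs x hx)
  have stepC1 : ∫ ω, fdS m q xb (X ω) (C ω) ∂P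
      = (∫ ω, fdS m q xb 0 (C ω) * (1 - |X ω - 0|) ∂P)
        + ∫ ω, fdS m q xb 1 (C ω) * (1 - |X ω - 1|) ∂P := by
    rw [← integral_add (hSIXint 0 (Or.inl rfl)) (hSIXint 1 (Or.inr rfl))]
    refine integral_congr_ae (ae_of_all _ fun ω => ?_)
    rcases hX01 ω with h | h <;> norm_num [h]
  have stepC2 : ∀ x, (x = 0 ∨ x = 1) →
      ∫ ω, fdS m q xb x (C ω) * (1 - |X ω - x|) ∂P
        = ∫ ω, fdS m q xb x (C ω) * e x (C ω) ∂P :=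
    fun x hx => fd_pullout hG1 (fd_meas_comp (T := C) (hScmeas x)) (hSIXint x hx)
      (hIXint x hx) (hcondX x hx)
  have hSeint : ∀ x, (x = 0 ∨ x = 1) →
      Integrable (fun ω => fdS m q xb x (C ω) * e x (C ω)) P :=
    fun x hx => mul_bdd _ (hScint x hx) _ ((hec x).comp hC).aestronglyMeasurable 1
      (fun ω => heabs1 x (C ω) hx)
  have stepC3 : (∫ ω, fdS m q xb 0 (C ω) * e 0 (C ω) ∂P)
      + (∫ ω, fdS m q xb 1 (C ω) * e 1 (C ω) ∂P) = ∫ ω, fdTau m q e xb (C ω) ∂P := by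
    rw [← integral_add (hSeint 0 (Or.inl rfl)) (hSeint 1 (Or.inr rfl))]
    refine integral_congr_ae (ae_of_all _ fun ω => ?_)
    simp only [fdS, fdTau]; ring
  have hCeq : ∫ ω, fdS m q xb (X ω) (C ω) ∂P = ∫ ω, fdTau m q e xb (C ω) ∂P := by
    rw [stepC1, stepC2 0 (Or.inl rfl), stepC2 1 (Or.inr rfl), stepC3]
  -- Part B : ∫ π r = ∫ τ
  have hRcmeas : ∀ z : ℝ, Measurable fun c : 𝒞 => fdR m e z c := by
    intro z; simp only [fdR]
    exact ((hmc z 0).mul (hec 0)).add ((hmc z 1).mul (hec 1))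
  have hRint : ∀ z, (z = 0 ∨ z = 1) → Integrable (fun ω => fdR m e z (C ω)) P := by
    intro z hz
    have h0 := mul_bdd _ (hMint z 0 hz (Or.inl rfl)) _
      ((hec 0).comp hC).aestronglyMeasurable 1 (fun ω => heabs1 0 (C ω) (Or.inl rfl))
    have h1 := mul_bdd _ (hMint z 1 hz (Or.inr rfl)) _
      ((hec 1).comp hC).aestronglyMeasurable 1 (fun ω => heabs1 1 (C ω) (Or.inr rfl))
    exact (h0.add h1).congr (ae_of_all _ fun ω => by simp [fdR])
  have hπXC : Measurable fun ω => fdPi e xb (X ω) (C ω) := hπφ.comp (hX.prodMk hC)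
  have hGzint : ∀ z, (z = 0 ∨ z = 1) →
      Integrable (fun ω => fdPi e xb (X ω) (C ω) * fdR m e z (C ω)) P := by
    intro z hz
    refine Integrable.bdd_mul (c := 1 / δ) (hRint z hz) hπXC.aestronglyMeasurable (ae_of_all _ fun ω => ?_)
    simpa [Real.norm_eq_abs] using hπb (X ω) (C ω) (hX01 ω)
  have hGzIZint : ∀ z, (z = 0 ∨ z = 1) →
      Integrable (fun ω => (fdPi e xb (X ω) (C ω) * fdR m e z (C ω)) * (1 - |Z ω - z|)) P :=
    fun z hz => mul_bdd _ (hGzint z hz) _ (hIZm z).aestronglyMeasurable 1 (hIZabs z hz)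
  have stepB1 : ∫ ω, fdPi e xb (X ω) (C ω) * fdR m e (Z ω) (C ω) ∂P
      = (∫ ω, (fdPi e xb (X ω) (C ω) * fdR m e 0 (C ω)) * (1 - |Z ω - 0|) ∂P)
        + ∫ ω, (fdPi e xb (X ω) (C ω) * fdR m e 1 (C ω)) * (1 - |Z ω - 1|) ∂P := by
    rw [← integral_add (hGzIZint 0 (Or.inl rfl)) (hGzIZint 1 (Or.inr rfl))]
    refine integral_congr_ae (ae_of_all _ fun ω => ?_)
    rcases hZ01 ω with h | h <;> norm_num [h]
  have stepB2 : ∀ z, (z = 0 ∨ z = 1) →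
      ∫ ω, (fdPi e xb (X ω) (C ω) * fdR m e z (C ω)) * (1 - |Z ω - z|) ∂P
        = ∫ ω, (fdPi e xb (X ω) (C ω) * fdR m e z (C ω)) * q z (X ω) (C ω) ∂P :=
    fun z hz => fd_pullout hG2 (fd_meas_comp (T := fun ω => (X ω, C ω))
      (φ := fun p : ℝ × 𝒞 => fdPi e xb p.1 p.2 * fdR m e z p.2)
      (hπφ.mul ((hRcmeas z).comp measurable_snd))) (hGzIZint z hz) (hIZint z hz) (hcondZ z hz)
  have hGzqint : ∀ z, (z = 0 ∨ z = 1) →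
      Integrable (fun ω => (fdPi e xb (X ω) (C ω) * fdR m e z (C ω)) * q z (X ω) (C ω)) P :=
    fun z hz => mul_bdd _ (hGzint z hz) _ (hq_meas.comp (measurable_const.prodMk
      (hX.prodMk hC))).aestronglyMeasurable 1 (fun ω => hqabs1 z (X ω) (C ω) hz (hX01 ω))
  have stepB3 : (∫ ω, (fdPi e xb (X ω) (C ω) * fdR m e 0 (C ω)) * q 0 (X ω) (C ω) ∂P)
      + (∫ ω, (fdPi e xb (X ω) (C ω) * fdR m e 1 (C ω)) * q 1 (X ω) (C ω) ∂P)
      = ∫ ω, fdPi e xb (X ω) (C ω) * fdNu m q e (X ω) (C ω) ∂P := by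
    rw [← integral_add (hGzqint 0 (Or.inl rfl)) (hGzqint 1 (Or.inr rfl))]
    refine integral_congr_ae (ae_of_all _ fun ω => ?_)
    simp only [fdNu]; ring
  have hνcmeas : ∀ x : ℝ, Measurable fun c : 𝒞 => fdNu m q e x c := by
    intro x; simp only [fdNu]
    exact ((hRcmeas 0).mul (hqc 0 x)).add ((hRcmeas 1).mul (hqc 1 x))
  have hνint : ∀ x, (x = 0 ∨ x = 1) → Integrable (fun ω => fdNu m q e x (C ω)) P := by
    intro x hx
    have h0 := mul_bdd _ (hRint 0 (Or.inl rfl)) _ ((hqc 0 x).comp hC).aestronglyMeasurable 1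
      (fun ω => hqabs1 0 x (C ω) (Or.inl rfl) hx)
    have h1 := mul_bdd _ (hRint 1 (Or.inr rfl)) _ ((hqc 1 x).comp hC).aestronglyMeasurable 1
      (fun ω => hqabs1 1 x (C ω) (Or.inr rfl) hx)
    exact (h0.add h1).congr (ae_of_all _ fun ω => by simp [fdNu])
  have hHint : ∀ x, (x = 0 ∨ x = 1) →
      Integrable (fun ω => fdPi e xb x (C ω) * fdNu m q e x (C ω)) P := by
    intro x hx
    refine Integrable.bdd_mul (c := 1 / δ) (hνint x hx) ((hπxc x).comp hC).aestronglyMeasurable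
      (ae_of_all _ fun ω => ?_)
    simpa [Real.norm_eq_abs] using hπb x (C ω) hx
  have hHIXint : ∀ x, (x = 0 ∨ x = 1) →
      Integrable (fun ω => (fdPi e xb x (C ω) * fdNu m q e x (C ω)) * (1 - |X ω - x|)) P :=
    fun x hx => mul_bdd _ (hHint x hx) _ (hIXm x).aestronglyMeasurable 1 (hIXabs x hx)
  have stepB4 : ∫ ω, fdPi e xb (X ω) (C ω) * fdNu m q e (X ω) (C ω) ∂P
      = (∫ ω, (fdPi e xb 0 (C ω) * fdNu m q e 0 (C ω)) * (1 - |X ω - 0|) ∂P)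
        + ∫ ω, (fdPi e xb 1 (C ω) * fdNu m q e 1 (C ω)) * (1 - |X ω - 1|) ∂P := by
    rw [← integral_add (hHIXint 0 (Or.inl rfl)) (hHIXint 1 (Or.inr rfl))]
    refine integral_congr_ae (ae_of_all _ fun ω => ?_)
    rcases hX01 ω with h | h <;> norm_num [h]
  have stepB5 : ∀ x, (x = 0 ∨ x = 1) →
      ∫ ω, (fdPi e xb x (C ω) * fdNu m q e x (C ω)) * (1 - |X ω - x|) ∂P
        = ∫ ω, (fdPi e xb x (C ω) * fdNu m q e x (C ω)) * e x (C ω) ∂P :=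
    fun x hx => fd_pullout hG1 (fd_meas_comp (T := C)
      (φ := fun c => fdPi e xb x c * fdNu m q e x c) ((hπxc x).mul (hνcmeas x)))
      (hHIXint x hx) (hIXint x hx) (hcondX x hx)
  have hHeint : ∀ x, (x = 0 ∨ x = 1) →
      Integrable (fun ω => (fdPi e xb x (C ω) * fdNu m q e x (C ω)) * e x (C ω)) P :=
    fun x hx => mul_bdd _ (hHint x hx) _ ((hec x).comp hC).aestronglyMeasurable 1
      (fun ω => heabs1 x (C ω) hx)
  have hτpt : ∀ c : 𝒞, (fdPi e xb 0 c * fdNu m q e 0 c) * e 0 c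
      + (fdPi e xb 1 c * fdNu m q e 1 c) * e 1 c = fdTau m q e xb c := by
    intro c
    have h0 := he_ne 0 c (Or.inl rfl)
    have h1 := he_ne 1 c (Or.inr rfl)
    rcases hxb with rfl | rfl <;>
      · simp only [fdPi, fdNu, fdR, fdTau]
        norm_num
        field_simp
        ring
  have stepB6 : (∫ ω, (fdPi e xb 0 (C ω) * fdNu m q e 0 (C ω)) * e 0 (C ω) ∂P)
      + (∫ ω, (fdPi e xb 1 (C ω) * fdNu m q e 1 (C ω)) * e 1 (C ω) ∂P)
      = ∫ ω, fdTau m q e xb (C ω) ∂P := by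
    rw [← integral_add (hHeint 0 (Or.inl rfl)) (hHeint 1 (Or.inr rfl))]
    refine integral_congr_ae (ae_of_all _ fun ω => ?_)
    simpa using hτpt (C ω)
  have hB : ∫ ω, fdPi e xb (X ω) (C ω) * fdR m e (Z ω) (C ω) ∂P
      = ∫ ω, fdTau m q e xb (C ω) ∂P := by
    rw [stepB1, stepB2 0 (Or.inl rfl), stepB2 1 (Or.inr rfl), stepB3, stepB4,
      stepB5 0 (Or.inl rfl), stepB5 1 (Or.inr rfl), stepB6]
  exact ⟨hA.trans (hCeq.trans hB.symm), hB.trans hCeq.symm, hCeq⟩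
end
end

section
/- Fix x̄ ∈ {0,1} and let φ_x̄(V;η) = ξ_x̄(Z,X,C)·(Y − m(Z,X,C)) + π_x̄(X,C)·(r(Z,C) − ν(X,C)) + s_x̄(X,C) be the front-door pseudo-outcome evaluated at the true nuisances. Then E[φ_x̄(V;η) | σ(C)] = τ_x̄(C) almost surely. -/
open MeasureTheory
open scoped ENNReal

noncomputable section

variable {𝒞 : Type*}

section FDHelpers

variable {Ω : Type*} {mΩ : MeasurableSpace Ω} {P : Measure Ω} [IsProbabilityMeasure P]

lemma fd_int_bdd {f : Ω → ℝ} (B : ℝ) (hf : AEStronglyMeasurable f P) (hB : ∀ ω, ‖f ω‖ ≤ B) :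
    Integrable f P :=
  Integrable.mono' (integrable_const B) hf (Filter.Eventually.of_forall hB)

lemma fd_int_mul_bdd {f g : Ω → ℝ} (B : ℝ) (hf : Integrable f P)
    (hg : AEStronglyMeasurable g P) (hB : ∀ ω, ‖g ω‖ ≤ B) :
    Integrable (fun ω => f ω * g ω) P :=
  (hf.bdd_mul hg (c := B) (Filter.Eventually.of_forall hB)).congr (Filter.Eventually.of_forall fun ω => mul_comm _ _)

lemma fd_integral_mul_condexp {m : MeasurableSpace Ω} (hm : m ≤ mΩ) {f g : Ω → ℝ}
    (hg : StronglyMeasurable[m] g) (B : ℝ) (hgB : ∀ ω, ‖g ω‖ ≤ B) (hf : Integrable f P) :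
    ∫ ω, g ω * f ω ∂P = ∫ ω, g ω * (P[f|m]) ω ∂P := by
  have hgf : Integrable (g * f) P :=
    hf.bdd_mul ((hg.mono hm).aestronglyMeasurable) (c := B) (Filter.Eventually.of_forall hgB)
  have h1 : P[g * f|m] =ᵐ[P] g * P[f|m] := condExp_mul_of_stronglyMeasurable_left hg hgf hf
  calc ∫ ω, g ω * f ω ∂P = ∫ ω, (P[g * f|m]) ω ∂P := (integral_condExp hm).symm
    _ = ∫ ω, (g * P[f|m]) ω ∂P := integral_congr_ae h1
    _ = ∫ ω, g ω * (P[f|m]) ω ∂P := rfl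

end FDHelpers

/-- **FDPO consistency.** For x̄ ∈ {0,1}, the front-door pseudo-outcome at the
true nuisances satisfies E[φ_x̄(V;η) | σ(C)] = τ_x̄(C) almost surely. -/
theorem fd_pseudo_outcome_consistency
    {Ω : Type*} [MeasurableSpace Ω] [MeasurableSpace 𝒞]
    (P : Measure Ω) [IsProbabilityMeasure P]
    (C : Ω → 𝒞) (X Z Y : Ω → ℝ)
    (hC : Measurable C) (hX : Measurable X) (hZ : Measurable Z) (hY : Measurable Y)
    (hX01 : ∀ ω, X ω = 0 ∨ X ω = 1) (hZ01 : ∀ ω, Z ω = 0 ∨ Z ω = 1)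
    (hY2 : MemLp Y 2 P)
    (m : ℝ → ℝ → 𝒞 → ℝ) (e : ℝ → 𝒞 → ℝ) (q : ℝ → ℝ → 𝒞 → ℝ)
    (hm_meas : Measurable fun p : ℝ × ℝ × 𝒞 => m p.1 p.2.1 p.2.2)
    (he_meas : Measurable fun p : ℝ × 𝒞 => e p.1 p.2)
    (hq_meas : Measurable fun p : ℝ × ℝ × 𝒞 => q p.1 p.2.1 p.2.2)
    (hm : (fun ω => m (Z ω) (X ω) (C ω))
        =ᵐ[P] P[Y | MeasurableSpace.comap (fun ω => (Z ω, X ω, C ω)) inferInstance])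
    (he1 : (fun ω => e 1 (C ω)) =ᵐ[P] P[X | MeasurableSpace.comap C inferInstance])
    (he0 : ∀ c, e 0 c = 1 - e 1 c)
    (hq1 : (fun ω => q 1 (X ω) (C ω))
        =ᵐ[P] P[Z | MeasurableSpace.comap (fun ω => (X ω, C ω)) inferInstance])
    (hq0 : ∀ x c, q 0 x c = 1 - q 1 x c)
    (δ : ℝ) (hδ0 : 0 < δ) (hδ2 : δ < 1 / 2)
    (he_pos : ∀ x c, (x = 0 ∨ x = 1) → δ ≤ e x c ∧ e x c ≤ 1 - δ)
    (hq_pos : ∀ z x c, (z = 0 ∨ z = 1) → (x = 0 ∨ x = 1) → δ ≤ q z x c ∧ q z x c ≤ 1 - δ)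
    (xb : ℝ) (hxb : xb = 0 ∨ xb = 1) :
    P[(fun ω => fdPhi m e q xb (Z ω) (X ω) (C ω) (Y ω))
        | MeasurableSpace.comap C inferInstance]
      =ᵐ[P] fun ω => fdTau m q e xb (C ω) := by
  classical
  have hmC : (MeasurableSpace.comap C inferInstance : MeasurableSpace Ω) ≤ (inferInstance : MeasurableSpace Ω) := hC.comap_le
  have hmXC : (MeasurableSpace.comap (fun ω => (X ω, C ω)) inferInstance : MeasurableSpace Ω) ≤ (inferInstance : MeasurableSpace Ω) := (hX.prodMk hC).comap_le
  have hmZXC : (MeasurableSpace.comap (fun ω => (Z ω, X ω, C ω)) inferInstance : MeasurableSpace Ω) ≤ (inferInstance : MeasurableSpace Ω) :=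
    (hZ.prodMk (hX.prodMk hC)).comap_le
  have hCXC : (MeasurableSpace.comap C inferInstance : MeasurableSpace Ω) ≤ (MeasurableSpace.comap (fun ω => (X ω, C ω)) inferInstance : MeasurableSpace Ω) := by
    have h1 : (MeasurableSpace.comap C inferInstance : MeasurableSpace Ω) = MeasurableSpace.comap (fun ω => (X ω, C ω))
        (MeasurableSpace.comap Prod.snd inferInstance) := by
      rw [MeasurableSpace.comap_comp]; rfl
    rw [h1]
    exact MeasurableSpace.comap_mono measurable_snd.comap_le
  have hXCZXC : (MeasurableSpace.comap (fun ω => (X ω, C ω)) inferInstance : MeasurableSpace Ω) ≤ (MeasurableSpace.comap (fun ω => (Z ω, X ω, C ω)) inferInstance : MeasurableSpace Ω) := by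
    have h1 : (MeasurableSpace.comap (fun ω => (X ω, C ω)) inferInstance : MeasurableSpace Ω) = MeasurableSpace.comap (fun ω => (Z ω, X ω, C ω))
        (MeasurableSpace.comap Prod.snd inferInstance) := by
      rw [MeasurableSpace.comap_comp]; rfl
    rw [h1]
    exact MeasurableSpace.comap_mono measurable_snd.comap_le
  have hCZXC : (MeasurableSpace.comap C inferInstance : MeasurableSpace Ω) ≤ (MeasurableSpace.comap (fun ω => (Z ω, X ω, C ω)) inferInstance : MeasurableSpace Ω) := hCXC.trans hXCZXC
  -- measurability transfer
  have measC : ∀ {g : 𝒞 → ℝ}, Measurable g → StronglyMeasurable[(MeasurableSpace.comap C inferInstance : MeasurableSpace Ω)] fun ω => g (C ω) :=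
    fun hg => (hg.comp (comap_measurable C)).stronglyMeasurable
  have measXC : ∀ {g : ℝ × 𝒞 → ℝ}, Measurable g →
      StronglyMeasurable[(MeasurableSpace.comap (fun ω => (X ω, C ω)) inferInstance : MeasurableSpace Ω)] fun ω => g (X ω, C ω) :=
    fun hg => (hg.comp (comap_measurable _)).stronglyMeasurable
  have measZXC : ∀ {g : ℝ × ℝ × 𝒞 → ℝ}, Measurable g →
      StronglyMeasurable[(MeasurableSpace.comap (fun ω => (Z ω, X ω, C ω)) inferInstance : MeasurableSpace Ω)] fun ω => g (Z ω, X ω, C ω) :=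
    fun hg => (hg.comp (comap_measurable _)).stronglyMeasurable
  -- slice measurability
  have hqP : ∀ z0 : ℝ, Measurable fun p : ℝ × 𝒞 => q z0 p.1 p.2 :=
    fun z0 => hq_meas.comp (measurable_const.prodMk measurable_id)
  have hmP : ∀ z0 : ℝ, Measurable fun p : ℝ × 𝒞 => m z0 p.1 p.2 :=
    fun z0 => hm_meas.comp (measurable_const.prodMk measurable_id)
  have hqC : ∀ z0 x0 : ℝ, Measurable fun c : 𝒞 => q z0 x0 c :=
    fun z0 x0 => hq_meas.comp (measurable_const.prodMk (measurable_const.prodMk measurable_id))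
  have hmCm : ∀ z0 x0 : ℝ, Measurable fun c : 𝒞 => m z0 x0 c :=
    fun z0 x0 => hm_meas.comp (measurable_const.prodMk (measurable_const.prodMk measurable_id))
  have heC : ∀ x0 : ℝ, Measurable fun c : 𝒞 => e x0 c :=
    fun x0 => he_meas.comp (measurable_const.prodMk measurable_id)
  -- basic integrabilities
  have hXint : Integrable X P :=
    fd_int_bdd 1 hX.aestronglyMeasurable (by intro ω; rcases hX01 ω with h | h <;> simp [h])
  have hZint : Integrable Z P :=
    fd_int_bdd 1 hZ.aestronglyMeasurable (by intro ω; rcases hZ01 ω with h | h <;> simp [h])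
  have hYint : Integrable Y P := hY2.integrable one_le_two
  have hmWint : Integrable (fun ω => m (Z ω) (X ω) (C ω)) P := integrable_condExp.congr hm.symm
  -- pointwise bounds
  have hq_bdd : ∀ z0 x0 : ℝ, (z0 = 0 ∨ z0 = 1) → (x0 = 0 ∨ x0 = 1) → ∀ c, ‖q z0 x0 c‖ ≤ 1 := by
    intro z0 x0 hz hx c
    rw [Real.norm_eq_abs, abs_le]
    have h1 := (hq_pos z0 x0 c hz hx).1
    have h2 := (hq_pos z0 x0 c hz hx).2
    constructor <;> linarith
  have he_bdd : ∀ x0 : ℝ, (x0 = 0 ∨ x0 = 1) → ∀ c, ‖e x0 c‖ ≤ 1 := by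
    intro x0 hx c
    rw [Real.norm_eq_abs, abs_le]
    have h1 := (he_pos x0 c hx).1
    have h2 := (he_pos x0 c hx).2
    constructor <;> linarith
  -- the key integrability lemma
  have key_int : ∀ z0 x0 : ℝ, (z0 = 0 ∨ z0 = 1) → (x0 = 0 ∨ x0 = 1) →
      Integrable (fun ω => m z0 x0 (C ω)) P := by
    intro z0 x0 hz0 hx0
    have hXmXC : StronglyMeasurable[(MeasurableSpace.comap (fun ω => (X ω, C ω)) inferInstance : MeasurableSpace Ω)] X := measXC measurable_fst
    obtain ⟨iZ, hiZm, hiZ01, hiZone, hiZzero, hiZcond⟩ :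
        ∃ iZ : Ω → ℝ, Measurable iZ ∧ (∀ ω, iZ ω = 0 ∨ iZ ω = 1) ∧
          (∀ ω, Z ω = z0 → iZ ω = 1) ∧ (∀ ω, Z ω ≠ z0 → iZ ω = 0) ∧
          P[iZ|(MeasurableSpace.comap (fun ω => (X ω, C ω)) inferInstance : MeasurableSpace Ω)] =ᵐ[P] fun ω => q z0 (X ω) (C ω) := by
      rcases hz0 with h | h <;> subst h
      · refine ⟨fun ω => 1 - Z ω, measurable_const.sub hZ, ?_, ?_, ?_, ?_⟩
        · intro ω; rcases hZ01 ω with hh | hh <;> simp [hh]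
        · intro ω hh; simp [hh]
        · intro ω hh
          rcases hZ01 ω with h2 | h2
          · exact absurd h2 hh
          · simp [h2]
        · have h1 : P[(fun ω => 1 - Z ω)|(MeasurableSpace.comap (fun ω => (X ω, C ω)) inferInstance : MeasurableSpace Ω)]
              = P[(fun _ : Ω => (1:ℝ)) - Z|(MeasurableSpace.comap (fun ω => (X ω, C ω)) inferInstance : MeasurableSpace Ω)] := rfl
          have h2 : P[(fun _ : Ω => (1:ℝ)) - Z|(MeasurableSpace.comap (fun ω => (X ω, C ω)) inferInstance : MeasurableSpace Ω)] =ᵐ[P]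
              P[(fun _ : Ω => (1:ℝ))|(MeasurableSpace.comap (fun ω => (X ω, C ω)) inferInstance : MeasurableSpace Ω)] - P[Z|(MeasurableSpace.comap (fun ω => (X ω, C ω)) inferInstance : MeasurableSpace Ω)] :=
            condExp_sub (integrable_const 1) hZint _
          rw [h1]
          refine h2.trans ?_
          rw [condExp_const hmXC]
          filter_upwards [hq1] with ω hω
          simp only [Pi.sub_apply]
          rw [hq0, hω]
      · refine ⟨Z, hZ, hZ01, ?_, ?_, hq1.symm⟩
        · intro ω hh; exact hh
        · intro ω hh
          rcases hZ01 ω with h2 | h2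
          · exact h2
          · exact absurd h2 hh
    obtain ⟨iX, hiXm, hiXmXC, hiX01, hiXone, hiXzero, hiXcond⟩ :
        ∃ iX : Ω → ℝ, Measurable iX ∧ StronglyMeasurable[(MeasurableSpace.comap (fun ω => (X ω, C ω)) inferInstance : MeasurableSpace Ω)] iX ∧
          (∀ ω, iX ω = 0 ∨ iX ω = 1) ∧
          (∀ ω, X ω = x0 → iX ω = 1) ∧ (∀ ω, X ω ≠ x0 → iX ω = 0) ∧
          P[iX|(MeasurableSpace.comap C inferInstance : MeasurableSpace Ω)] =ᵐ[P] fun ω => e x0 (C ω) := by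
      rcases hx0 with h | h <;> subst h
      · refine ⟨fun ω => 1 - X ω, measurable_const.sub hX,
          (stronglyMeasurable_const.sub hXmXC : _), ?_, ?_, ?_, ?_⟩
        · intro ω; rcases hX01 ω with hh | hh <;> simp [hh]
        · intro ω hh; simp [hh]
        · intro ω hh
          rcases hX01 ω with h2 | h2
          · exact absurd h2 hh
          · simp [h2]
        · have h1 : P[(fun ω => 1 - X ω)|(MeasurableSpace.comap C inferInstance : MeasurableSpace Ω)]
              = P[(fun _ : Ω => (1:ℝ)) - X|(MeasurableSpace.comap C inferInstance : MeasurableSpace Ω)] := rfl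
          have h2 : P[(fun _ : Ω => (1:ℝ)) - X|(MeasurableSpace.comap C inferInstance : MeasurableSpace Ω)] =ᵐ[P]
              P[(fun _ : Ω => (1:ℝ))|(MeasurableSpace.comap C inferInstance : MeasurableSpace Ω)] - P[X|(MeasurableSpace.comap C inferInstance : MeasurableSpace Ω)] :=
            condExp_sub (integrable_const 1) hXint _
          rw [h1]
          refine h2.trans ?_
          rw [condExp_const hmC]
          filter_upwards [he1] with ω hω
          simp only [Pi.sub_apply]
          rw [he0, hω]
      · refine ⟨X, hX, hXmXC, hX01, ?_, ?_, he1.symm⟩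
        · intro ω hh; exact hh
        · intro ω hh
          rcases hX01 ω with h2 | h2
          · exact h2
          · exact absurd h2 hh
    have hiZ0 : ∀ ω, 0 ≤ iZ ω := by
      intro ω; rcases hiZ01 ω with h | h <;> simp [h]
    have hiX0 : ∀ ω, 0 ≤ iX ω := by
      intro ω; rcases hiX01 ω with h | h <;> simp [h]
    have hiZB : ∀ ω, ‖iZ ω‖ ≤ 1 := by
      intro ω; rcases hiZ01 ω with h | h <;> simp [h]
    have hiXB : ∀ ω, ‖iX ω‖ ≤ 1 := by
      intro ω; rcases hiX01 ω with h | h <;> simp [h]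
    have hiZint : Integrable iZ P := fd_int_bdd 1 hiZm.aestronglyMeasurable hiZB
    have hiXint : Integrable iX P := fd_int_bdd 1 hiXm.aestronglyMeasurable hiXB
    -- step 1 : multiply by iZ costs at most a factor δ
    have step1 : ∀ g : Ω → ℝ, StronglyMeasurable[(MeasurableSpace.comap (fun ω => (X ω, C ω)) inferInstance : MeasurableSpace Ω)] g → (∀ ω, 0 ≤ g ω) →
        ∀ B : ℝ, (∀ ω, ‖g ω‖ ≤ B) →
        δ * ∫ ω, g ω ∂P ≤ ∫ ω, g ω * iZ ω ∂P := by
      intro g hgm hg0 B hgB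
      have hgint : Integrable g P := fd_int_bdd B (hgm.mono hmXC).aestronglyMeasurable hgB
      rw [fd_integral_mul_condexp hmXC hgm B hgB hiZint]
      have h2 : ∫ ω, g ω * (P[iZ|(MeasurableSpace.comap (fun ω => (X ω, C ω)) inferInstance : MeasurableSpace Ω)]) ω ∂P = ∫ ω, g ω * q z0 (X ω) (C ω) ∂P :=
        integral_congr_ae (by filter_upwards [hiZcond] with ω hω; rw [hω])
      rw [h2, ← integral_const_mul]
      refine integral_mono (hgint.const_mul δ)
        (fd_int_mul_bdd 1 hgint
          (((hqP z0).comp (hX.prodMk hC)).aestronglyMeasurable)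
          (fun ω => hq_bdd z0 (X ω) hz0 (hX01 ω) (C ω))) ?_
      intro ω
      calc δ * g ω = g ω * δ := mul_comm _ _
        _ ≤ g ω * q z0 (X ω) (C ω) :=
          mul_le_mul_of_nonneg_left (hq_pos z0 (X ω) (C ω) hz0 (hX01 ω)).1 (hg0 ω)
    -- step 2 : multiply by iX costs at most a factor δ
    have step2 : ∀ g : Ω → ℝ, StronglyMeasurable[(MeasurableSpace.comap C inferInstance : MeasurableSpace Ω)] g → (∀ ω, 0 ≤ g ω) →
        ∀ B : ℝ, (∀ ω, ‖g ω‖ ≤ B) →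
        δ * ∫ ω, g ω ∂P ≤ ∫ ω, g ω * iX ω ∂P := by
      intro g hgm hg0 B hgB
      have hgint : Integrable g P := fd_int_bdd B (hgm.mono hmC).aestronglyMeasurable hgB
      rw [fd_integral_mul_condexp hmC hgm B hgB hiXint]
      have h2 : ∫ ω, g ω * (P[iX|(MeasurableSpace.comap C inferInstance : MeasurableSpace Ω)]) ω ∂P = ∫ ω, g ω * e x0 (C ω) ∂P :=
        integral_congr_ae (by filter_upwards [hiXcond] with ω hω; rw [hω])
      rw [h2, ← integral_const_mul]
      refine integral_mono (hgint.const_mul δ)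
        (fd_int_mul_bdd 1 hgint (((heC x0).comp hC).aestronglyMeasurable)
          (fun ω => he_bdd x0 hx0 (C ω))) ?_
      intro ω
      calc δ * g ω = g ω * δ := mul_comm _ _
        _ ≤ g ω * e x0 (C ω) :=
          mul_le_mul_of_nonneg_left (he_pos x0 (C ω) hx0).1 (hg0 ω)
    -- truncations
    have htrunc : ∀ n : ℕ, StronglyMeasurable[(MeasurableSpace.comap C inferInstance : MeasurableSpace Ω)] fun ω => min |m z0 x0 (C ω)| (n:ℝ) :=
      fun n => measC (((hmCm z0 x0).abs).min measurable_const)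
    have htrunc0 : ∀ (n : ℕ) ω, 0 ≤ min |m z0 x0 (C ω)| (n:ℝ) :=
      fun n ω => le_min (abs_nonneg _) (Nat.cast_nonneg n)
    have htruncB : ∀ (n : ℕ) ω, ‖min |m z0 x0 (C ω)| (n:ℝ)‖ ≤ (n:ℝ) := by
      intro n ω
      rw [Real.norm_eq_abs, abs_of_nonneg (htrunc0 n ω)]
      exact min_le_right _ _
    have htruncint : ∀ n : ℕ, Integrable (fun ω => min |m z0 x0 (C ω)| (n:ℝ)) P :=
      fun n => fd_int_bdd _ (((htrunc n).mono hmC).aestronglyMeasurable) (htruncB n)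
    have main : ∀ n : ℕ, ∫ ω, min |m z0 x0 (C ω)| (n:ℝ) ∂P ≤
        (∫ ω, |m (Z ω) (X ω) (C ω)| ∂P) / (δ * δ) := by
      intro n
      have hg1m : StronglyMeasurable[(MeasurableSpace.comap (fun ω => (X ω, C ω)) inferInstance : MeasurableSpace Ω)] fun ω => min |m z0 x0 (C ω)| (n:ℝ) * iX ω :=
        ((htrunc n).mono hCXC).mul hiXmXC
      have hg10 : ∀ ω, 0 ≤ min |m z0 x0 (C ω)| (n:ℝ) * iX ω :=
        fun ω => mul_nonneg (htrunc0 n ω) (hiX0 ω)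
      have hg1B : ∀ ω, ‖min |m z0 x0 (C ω)| (n:ℝ) * iX ω‖ ≤ (n:ℝ) := by
        intro ω
        rw [norm_mul]
        calc ‖min |m z0 x0 (C ω)| (n:ℝ)‖ * ‖iX ω‖ ≤ (n:ℝ) * 1 :=
          mul_le_mul (htruncB n ω) (hiXB ω) (norm_nonneg _) (Nat.cast_nonneg n)
          _ = (n:ℝ) := mul_one _
      have hg1int : Integrable (fun ω => min |m z0 x0 (C ω)| (n:ℝ) * iX ω) P :=
        fd_int_bdd _ ((hg1m.mono hmXC).aestronglyMeasurable) hg1B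
      have s2 : δ * ∫ ω, min |m z0 x0 (C ω)| (n:ℝ) ∂P ≤
          ∫ ω, min |m z0 x0 (C ω)| (n:ℝ) * iX ω ∂P :=
        step2 _ (htrunc n) (htrunc0 n) _ (htruncB n)
      have s1 : δ * ∫ ω, min |m z0 x0 (C ω)| (n:ℝ) * iX ω ∂P ≤
          ∫ ω, (min |m z0 x0 (C ω)| (n:ℝ) * iX ω) * iZ ω ∂P :=
        step1 _ hg1m hg10 _ hg1B
      have bound : ∫ ω, (min |m z0 x0 (C ω)| (n:ℝ) * iX ω) * iZ ω ∂P ≤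
          ∫ ω, |m (Z ω) (X ω) (C ω)| ∂P := by
        refine integral_mono (fd_int_mul_bdd 1 hg1int hiZm.aestronglyMeasurable hiZB)
          hmWint.abs ?_
        intro ω
        dsimp only
        by_cases hxx : X ω = x0
        · by_cases hzz : Z ω = z0
          · rw [hiXone ω hxx, hiZone ω hzz, mul_one, mul_one]
            calc min |m z0 x0 (C ω)| (n:ℝ) ≤ |m z0 x0 (C ω)| := min_le_left _ _
              _ = |m (Z ω) (X ω) (C ω)| := by rw [hxx, hzz]
          · rw [hiZzero ω hzz, mul_zero]
            exact abs_nonneg _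
        · rw [hiXzero ω hxx, mul_zero, zero_mul]
          exact abs_nonneg _
      have hδδ : (0:ℝ) < δ * δ := mul_pos hδ0 hδ0
      rw [le_div_iff₀ hδδ]
      nlinarith [mul_le_mul_of_nonneg_left s2 hδ0.le]
    -- pass to the limit
    refine ⟨((hmCm z0 x0).comp hC).aestronglyMeasurable, ?_⟩
    rw [hasFiniteIntegral_iff_norm]
    have hpt : ∀ ω, ENNReal.ofReal ‖m z0 x0 (C ω)‖ =
        ⨆ n : ℕ, ENNReal.ofReal (min |m z0 x0 (C ω)| (n:ℝ)) := by
      intro ω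
      apply le_antisymm
      · have hle : ‖m z0 x0 (C ω)‖ = min |m z0 x0 (C ω)| ((⌈|m z0 x0 (C ω)|⌉₊ : ℝ)) := by
          rw [Real.norm_eq_abs, min_eq_left (Nat.le_ceil _)]
        rw [hle]
        exact le_iSup (fun n : ℕ => ENNReal.ofReal (min |m z0 x0 (C ω)| (n:ℝ)))
          ⌈|m z0 x0 (C ω)|⌉₊
      · refine iSup_le fun n => ENNReal.ofReal_le_ofReal ?_
        rw [Real.norm_eq_abs]
        exact min_le_left _ _
    calc ∫⁻ ω, ENNReal.ofReal ‖m z0 x0 (C ω)‖ ∂P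
        = ∫⁻ ω, ⨆ n : ℕ, ENNReal.ofReal (min |m z0 x0 (C ω)| (n:ℝ)) ∂P :=
          lintegral_congr hpt
      _ = ⨆ n : ℕ, ∫⁻ ω, ENNReal.ofReal (min |m z0 x0 (C ω)| (n:ℝ)) ∂P := by
          refine lintegral_iSup (fun n => ?_) ?_
          · exact ENNReal.measurable_ofReal.comp
              ((((hmCm z0 x0).comp hC).abs).min measurable_const)
          · intro a b hab ω
            exact ENNReal.ofReal_le_ofReal
              (le_min (min_le_left _ _) ((min_le_right _ _).trans (Nat.cast_le.mpr hab)))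
      _ ≤ ENNReal.ofReal ((∫ ω, |m (Z ω) (X ω) (C ω)| ∂P) / (δ * δ)) := by
          refine iSup_le fun n => ?_
          rw [← ofReal_integral_eq_lintegral_ofReal (htruncint n)
            (Filter.Eventually.of_forall (htrunc0 n))]
          exact ENNReal.ofReal_le_ofReal (main n)
      _ < ⊤ := ENNReal.ofReal_lt_top
  have hXB : ∀ ω, ‖X ω‖ ≤ 1 := by
    intro ω; rcases hX01 ω with h | h <;> simp [h]
  have hZB : ∀ ω, ‖Z ω‖ ≤ 1 := by
    intro ω; rcases hZ01 ω with h | h <;> simp [h]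
  -- integrability and measurability of the building blocks
  have hSint : ∀ x1 : ℝ, (x1 = 0 ∨ x1 = 1) → Integrable (fun ω => fdS m q xb x1 (C ω)) P := by
    intro x1 hx1
    have h1 : Integrable (fun ω => m 0 x1 (C ω) * q 0 xb (C ω)) P :=
      fd_int_mul_bdd 1 (key_int 0 x1 (Or.inl rfl) hx1) (((hqC 0 xb).comp hC).aestronglyMeasurable)
        (fun ω => hq_bdd 0 xb (Or.inl rfl) hxb (C ω))
    have h2 : Integrable (fun ω => m 1 x1 (C ω) * q 1 xb (C ω)) P :=
      fd_int_mul_bdd 1 (key_int 1 x1 (Or.inr rfl) hx1) (((hqC 1 xb).comp hC).aestronglyMeasurable)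
        (fun ω => hq_bdd 1 xb (Or.inr rfl) hxb (C ω))
    exact h1.add h2
  have hSmeasC : ∀ x1 : ℝ, StronglyMeasurable[(MeasurableSpace.comap C inferInstance : MeasurableSpace Ω)] fun ω => fdS m q xb x1 (C ω) :=
    fun x1 => measC (((hmCm 0 x1).mul (hqC 0 xb)).add ((hmCm 1 x1).mul (hqC 1 xb)))
  have hRint : ∀ z1 : ℝ, (z1 = 0 ∨ z1 = 1) → Integrable (fun ω => fdR m e z1 (C ω)) P := by
    intro z1 hz1
    have h1 : Integrable (fun ω => m z1 0 (C ω) * e 0 (C ω)) P :=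
      fd_int_mul_bdd 1 (key_int z1 0 hz1 (Or.inl rfl)) (((heC 0).comp hC).aestronglyMeasurable)
        (fun ω => he_bdd 0 (Or.inl rfl) (C ω))
    have h2 : Integrable (fun ω => m z1 1 (C ω) * e 1 (C ω)) P :=
      fd_int_mul_bdd 1 (key_int z1 1 hz1 (Or.inr rfl)) (((heC 1).comp hC).aestronglyMeasurable)
        (fun ω => he_bdd 1 (Or.inr rfl) (C ω))
    exact h1.add h2
  have hRmeasC : ∀ z1 : ℝ, StronglyMeasurable[(MeasurableSpace.comap C inferInstance : MeasurableSpace Ω)] fun ω => fdR m e z1 (C ω) :=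
    fun z1 => measC (((hmCm z1 0).mul (heC 0)).add ((hmCm z1 1).mul (heC 1)))
  have hfdRm : ∀ z1 : ℝ, Measurable fun c : 𝒞 => fdR m e z1 c :=
    fun z1 => ((hmCm z1 0).mul (heC 0)).add ((hmCm z1 1).mul (heC 1))
  have hνint : Integrable (fun ω => fdNu m q e (X ω) (C ω)) P := by
    have h1 : Integrable (fun ω => fdR m e 0 (C ω) * q 0 (X ω) (C ω)) P :=
      fd_int_mul_bdd 1 (hRint 0 (Or.inl rfl))
        (((hqP 0).comp (hX.prodMk hC)).aestronglyMeasurable)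
        (fun ω => hq_bdd 0 (X ω) (Or.inl rfl) (hX01 ω) (C ω))
    have h2 : Integrable (fun ω => fdR m e 1 (C ω) * q 1 (X ω) (C ω)) P :=
      fd_int_mul_bdd 1 (hRint 1 (Or.inr rfl))
        (((hqP 1).comp (hX.prodMk hC)).aestronglyMeasurable)
        (fun ω => hq_bdd 1 (X ω) (Or.inr rfl) (hX01 ω) (C ω))
    exact h1.add h2
  have hνmeasXC : StronglyMeasurable[(MeasurableSpace.comap (fun ω => (X ω, C ω)) inferInstance : MeasurableSpace Ω)] fun ω => fdNu m q e (X ω) (C ω) :=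
    measXC ((((hfdRm 0).comp measurable_snd).mul (hqP 0)).add
      (((hfdRm 1).comp measurable_snd).mul (hqP 1)))
  -- decomposition of r(Z,C)
  have hrZ_eq : (fun ω => fdR m e (Z ω) (C ω)) =
      fun ω => fdR m e 0 (C ω) + (fdR m e 1 (C ω) - fdR m e 0 (C ω)) * Z ω := by
    funext ω; rcases hZ01 ω with h | h <;> rw [h] <;> ring
  have hRdint : Integrable (fun ω => fdR m e 1 (C ω) - fdR m e 0 (C ω)) P :=
    (hRint 1 (Or.inr rfl)).sub (hRint 0 (Or.inl rfl))
  have hRdZint : Integrable (fun ω => (fdR m e 1 (C ω) - fdR m e 0 (C ω)) * Z ω) P :=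
    fd_int_mul_bdd 1 hRdint hZ.aestronglyMeasurable hZB
  have hrZint : Integrable (fun ω => fdR m e (Z ω) (C ω)) P := by
    rw [hrZ_eq]
    exact (hRint 0 (Or.inl rfl)).add hRdZint
  -- E[r(Z,C) | X, C] = ν(X,C)
  have hcond_r : P[(fun ω => fdR m e (Z ω) (C ω))|(MeasurableSpace.comap (fun ω => (X ω, C ω)) inferInstance : MeasurableSpace Ω)] =ᵐ[P]
      fun ω => fdNu m q e (X ω) (C ω) := by
    rw [hrZ_eq]
    refine (condExp_add (μ := P) (hRint 0 (Or.inl rfl)) hRdZint _).trans ?_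
    have h2 : P[(fun ω => fdR m e 0 (C ω))|(MeasurableSpace.comap (fun ω => (X ω, C ω)) inferInstance : MeasurableSpace Ω)] = fun ω => fdR m e 0 (C ω) :=
      condExp_of_stronglyMeasurable hmXC ((hRmeasC 0).mono hCXC) (hRint 0 (Or.inl rfl))
    have h3 : P[(fun ω => (fdR m e 1 (C ω) - fdR m e 0 (C ω)) * Z ω)|(MeasurableSpace.comap (fun ω => (X ω, C ω)) inferInstance : MeasurableSpace Ω)] =ᵐ[P]
        (fun ω => fdR m e 1 (C ω) - fdR m e 0 (C ω)) * P[Z|(MeasurableSpace.comap (fun ω => (X ω, C ω)) inferInstance : MeasurableSpace Ω)] :=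
      condExp_mul_of_stronglyMeasurable_left (((hRmeasC 1).sub (hRmeasC 0)).mono hCXC) hRdZint hZint
    filter_upwards [h3, hq1] with ω h3ω h1ω
    simp only [Pi.add_apply, h2, h3ω, Pi.mul_apply]
    rw [← h1ω]
    simp only [fdNu]
    rw [hq0]
    ring
  -- E[r(Z,C) - ν(X,C) | X, C] = 0
  have hcond_rν : P[(fun ω => fdR m e (Z ω) (C ω)) -
      (fun ω => fdNu m q e (X ω) (C ω))|(MeasurableSpace.comap (fun ω => (X ω, C ω)) inferInstance : MeasurableSpace Ω)] =ᵐ[P] 0 := by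
    refine (condExp_sub hrZint hνint _).trans ?_
    have h2 : P[(fun ω => fdNu m q e (X ω) (C ω))|(MeasurableSpace.comap (fun ω => (X ω, C ω)) inferInstance : MeasurableSpace Ω)] = fun ω => fdNu m q e (X ω) (C ω) :=
      condExp_of_stronglyMeasurable hmXC hνmeasXC hνint
    filter_upwards [hcond_r] with ω hω
    simp only [Pi.sub_apply, Pi.zero_apply, hω, h2, sub_self]
  -- the π factor
  have hπmeasP : Measurable fun p : ℝ × 𝒞 => fdPi e xb p.1 p.2 := by
    simp only [fdPi]
    refine Measurable.div ?_ he_meas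
    exact Measurable.ite (measurable_fst (measurableSet_singleton xb))
      measurable_const measurable_const
  have hπmXC : StronglyMeasurable[(MeasurableSpace.comap (fun ω => (X ω, C ω)) inferInstance : MeasurableSpace Ω)] fun ω => fdPi e xb (X ω) (C ω) := measXC hπmeasP
  have hπB : ∀ ω, ‖fdPi e xb (X ω) (C ω)‖ ≤ 1 / δ := by
    intro ω
    simp only [fdPi]
    rw [norm_div]
    have h1 := (he_pos (X ω) (C ω) (hX01 ω)).1
    have hnum : ‖if X ω = xb then (1:ℝ) else 0‖ ≤ 1 := by split <;> simp
    have hden : δ ≤ ‖e (X ω) (C ω)‖ := by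
      rw [Real.norm_eq_abs, abs_of_nonneg (by linarith)]
      exact h1
    exact div_le_div₀ zero_le_one hnum hδ0 hden
  have hrνint : Integrable ((fun ω => fdR m e (Z ω) (C ω)) -
      fun ω => fdNu m q e (X ω) (C ω)) P := hrZint.sub hνint
  have hT2int : Integrable ((fun ω => fdPi e xb (X ω) (C ω)) *
      ((fun ω => fdR m e (Z ω) (C ω)) - fun ω => fdNu m q e (X ω) (C ω))) P :=
    hrνint.bdd_mul ((hπmeasP.comp (hX.prodMk hC)).aestronglyMeasurable) (c := 1 / δ) (Filter.Eventually.of_forall hπB)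
  have hT2cond : P[(fun ω => fdPi e xb (X ω) (C ω)) *
      ((fun ω => fdR m e (Z ω) (C ω)) - fun ω => fdNu m q e (X ω) (C ω))|(MeasurableSpace.comap (fun ω => (X ω, C ω)) inferInstance : MeasurableSpace Ω)] =ᵐ[P] 0 := by
    refine (condExp_mul_of_stronglyMeasurable_left hπmXC hT2int hrνint).trans ?_
    filter_upwards [hcond_rν] with ω hω
    simp only [Pi.mul_apply, Pi.zero_apply, hω, mul_zero]
  -- tower helper
  have towerXC : ∀ f : Ω → ℝ, P[f|(MeasurableSpace.comap (fun ω => (X ω, C ω)) inferInstance : MeasurableSpace Ω)] =ᵐ[P] 0 → P[f|(MeasurableSpace.comap C inferInstance : MeasurableSpace Ω)] =ᵐ[P] 0 := by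
    intro f h
    have h1 : P[P[f|(MeasurableSpace.comap (fun ω => (X ω, C ω)) inferInstance : MeasurableSpace Ω)]|(MeasurableSpace.comap C inferInstance : MeasurableSpace Ω)] =ᵐ[P] P[f|(MeasurableSpace.comap C inferInstance : MeasurableSpace Ω)] := condExp_condExp_of_le hCXC hmXC
    refine h1.symm.trans ((condExp_congr_ae h).trans ?_)
    rw [condExp_zero]
  have towerZXC : ∀ f : Ω → ℝ, P[f|(MeasurableSpace.comap (fun ω => (Z ω, X ω, C ω)) inferInstance : MeasurableSpace Ω)] =ᵐ[P] 0 → P[f|(MeasurableSpace.comap C inferInstance : MeasurableSpace Ω)] =ᵐ[P] 0 := by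
    intro f h
    have h1 : P[P[f|(MeasurableSpace.comap (fun ω => (Z ω, X ω, C ω)) inferInstance : MeasurableSpace Ω)]|(MeasurableSpace.comap C inferInstance : MeasurableSpace Ω)] =ᵐ[P] P[f|(MeasurableSpace.comap C inferInstance : MeasurableSpace Ω)] := condExp_condExp_of_le hCZXC hmZXC
    refine h1.symm.trans ((condExp_congr_ae h).trans ?_)
    rw [condExp_zero]
  -- the ξ factor and the first term
  have hξmeasP : Measurable fun p : ℝ × ℝ × 𝒞 => fdXi q xb p.1 p.2.1 p.2.2 := by
    simp only [fdXi]
    exact (hq_meas.comp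
      (measurable_fst.prodMk (measurable_const.prodMk measurable_snd.snd))).div hq_meas
  have hξmZXC : StronglyMeasurable[(MeasurableSpace.comap (fun ω => (Z ω, X ω, C ω)) inferInstance : MeasurableSpace Ω)] fun ω => fdXi q xb (Z ω) (X ω) (C ω) :=
    measZXC hξmeasP
  have hξB : ∀ ω, ‖fdXi q xb (Z ω) (X ω) (C ω)‖ ≤ (1 - δ) / δ := by
    intro ω
    simp only [fdXi]
    rw [norm_div]
    have h1 := hq_pos (Z ω) xb (C ω) (hZ01 ω) hxb
    have h2 := hq_pos (Z ω) (X ω) (C ω) (hZ01 ω) (hX01 ω)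
    have hn1 : ‖q (Z ω) xb (C ω)‖ ≤ 1 - δ := by
      rw [Real.norm_eq_abs, abs_of_nonneg (by linarith [h1.1])]
      exact h1.2
    have hn2 : δ ≤ ‖q (Z ω) (X ω) (C ω)‖ := by
      rw [Real.norm_eq_abs, abs_of_nonneg (by linarith [h2.1])]
      exact h2.1
    exact div_le_div₀ (by linarith) hn1 hδ0 hn2
  have hYsubint : Integrable (Y - fun ω => m (Z ω) (X ω) (C ω)) P := hYint.sub hmWint
  have hT1int : Integrable ((fun ω => fdXi q xb (Z ω) (X ω) (C ω)) *
      (Y - fun ω => m (Z ω) (X ω) (C ω))) P :=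
    hYsubint.bdd_mul ((hξmeasP.comp (hZ.prodMk (hX.prodMk hC))).aestronglyMeasurable)
      (c := (1 - δ) / δ) (Filter.Eventually.of_forall hξB)
  have hcondYm : P[Y - (fun ω => m (Z ω) (X ω) (C ω))|(MeasurableSpace.comap (fun ω => (Z ω, X ω, C ω)) inferInstance : MeasurableSpace Ω)] =ᵐ[P] 0 := by
    refine (condExp_sub hYint hmWint _).trans ?_
    have h1 : P[(fun ω => m (Z ω) (X ω) (C ω))|(MeasurableSpace.comap (fun ω => (Z ω, X ω, C ω)) inferInstance : MeasurableSpace Ω)] =ᵐ[P] P[Y|(MeasurableSpace.comap (fun ω => (Z ω, X ω, C ω)) inferInstance : MeasurableSpace Ω)] :=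
      (condExp_congr_ae hm).trans (condExp_condExp_of_le le_rfl hmZXC)
    filter_upwards [h1] with ω hω
    simp only [Pi.sub_apply, Pi.zero_apply, hω, sub_self]
  have hT1cond : P[(fun ω => fdXi q xb (Z ω) (X ω) (C ω)) *
      (Y - fun ω => m (Z ω) (X ω) (C ω))|(MeasurableSpace.comap (fun ω => (Z ω, X ω, C ω)) inferInstance : MeasurableSpace Ω)] =ᵐ[P] 0 := by
    refine (condExp_mul_of_stronglyMeasurable_left hξmZXC hT1int hYsubint).trans ?_
    filter_upwards [hcondYm] with ω hω
    simp only [Pi.mul_apply, Pi.zero_apply, hω, mul_zero]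
  have hT1zero := towerZXC _ hT1cond
  have hT2zero := towerXC _ hT2cond
  -- the third term
  have hS_eq : (fun ω => fdS m q xb (X ω) (C ω)) =
      fun ω => fdS m q xb 0 (C ω) + (fdS m q xb 1 (C ω) - fdS m q xb 0 (C ω)) * X ω := by
    funext ω; rcases hX01 ω with h | h <;> rw [h] <;> ring
  have hSdint : Integrable (fun ω => fdS m q xb 1 (C ω) - fdS m q xb 0 (C ω)) P :=
    (hSint 1 (Or.inr rfl)).sub (hSint 0 (Or.inl rfl))
  have hSdXint : Integrable (fun ω => (fdS m q xb 1 (C ω) - fdS m q xb 0 (C ω)) * X ω) P :=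
    fd_int_mul_bdd 1 hSdint hX.aestronglyMeasurable hXB
  have hT3int : Integrable (fun ω => fdS m q xb (X ω) (C ω)) P := by
    rw [hS_eq]
    exact (hSint 0 (Or.inl rfl)).add hSdXint
  have hT3cond : P[(fun ω => fdS m q xb (X ω) (C ω))|(MeasurableSpace.comap C inferInstance : MeasurableSpace Ω)] =ᵐ[P]
      fun ω => fdTau m q e xb (C ω) := by
    rw [hS_eq]
    refine (condExp_add (μ := P) (hSint 0 (Or.inl rfl)) hSdXint _).trans ?_
    have h2 : P[(fun ω => fdS m q xb 0 (C ω))|(MeasurableSpace.comap C inferInstance : MeasurableSpace Ω)] = fun ω => fdS m q xb 0 (C ω) :=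
      condExp_of_stronglyMeasurable hmC (hSmeasC 0) (hSint 0 (Or.inl rfl))
    have h3 : P[(fun ω => (fdS m q xb 1 (C ω) - fdS m q xb 0 (C ω)) * X ω)|(MeasurableSpace.comap C inferInstance : MeasurableSpace Ω)] =ᵐ[P]
        (fun ω => fdS m q xb 1 (C ω) - fdS m q xb 0 (C ω)) * P[X|(MeasurableSpace.comap C inferInstance : MeasurableSpace Ω)] :=
      condExp_mul_of_stronglyMeasurable_left ((hSmeasC 1).sub (hSmeasC 0)) hSdXint hXint
    filter_upwards [h3, he1] with ω h3ω h1ω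
    simp only [Pi.add_apply, h2, h3ω, Pi.mul_apply]
    rw [← h1ω]
    simp only [fdS, fdTau]
    rw [he0]
    ring
  -- assemble
  refine (condExp_add (μ := P) (hT1int.add hT2int) hT3int _).trans ?_
  have hsum2 : P[(fun ω => fdXi q xb (Z ω) (X ω) (C ω)) *
        (Y - fun ω => m (Z ω) (X ω) (C ω)) +
      (fun ω => fdPi e xb (X ω) (C ω)) *
        ((fun ω => fdR m e (Z ω) (C ω)) - fun ω => fdNu m q e (X ω) (C ω))|(MeasurableSpace.comap C inferInstance : MeasurableSpace Ω)] =ᵐ[P]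
      P[(fun ω => fdXi q xb (Z ω) (X ω) (C ω)) *
        (Y - fun ω => m (Z ω) (X ω) (C ω))|(MeasurableSpace.comap C inferInstance : MeasurableSpace Ω)] +
      P[(fun ω => fdPi e xb (X ω) (C ω)) *
        ((fun ω => fdR m e (Z ω) (C ω)) - fun ω => fdNu m q e (X ω) (C ω))|(MeasurableSpace.comap C inferInstance : MeasurableSpace Ω)] :=
    condExp_add hT1int hT2int _
  filter_upwards [hsum2, hT1zero, hT2zero, hT3cond] with ω h2 hz1 hz2 h3
  simp only [Pi.add_apply, Pi.zero_apply] at *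
  rw [h2, hz1, hz2, h3, zero_add, zero_add]
end
end

section
/- Fix x̄ ∈ {0,1}. Let m̂, ê, q̂ be arbitrary bounded measurable estimates of m, e, q with δ ≤ ê(x,c), q̂(z,x,c) ≤ 1−δ, and let φ_x̄(V;η̂) denote the front-door pseudo-outcome built from (m̂,ê,q̂). Then the bias decomposes exactly into second-order products: E[φ_x̄(V;η̂)] − E[φ_x̄(V;η)] = E[(m̂−m)(Z,X,C)·(ξ_x̄−ξ̂_x̄)(Z,X,C)] + E[(π̂_x̄−π_x̄)(X,C)·(ν_{m̂qê}−ν_{m̂q̂ê})(X,C)] + Σ_{z,x∈{0,1}} E[m̂(z,x,C)·(q(z,x̄,C)−q̂(z,x̄,C))·(ê(x,C)−e(x,C))]. -/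
open MeasureTheory
open scoped ENNReal

noncomputable section

variable {𝒞 : Type*}

section FDAux

variable {Ω : Type*} [mΩ : MeasurableSpace Ω] {P : Measure Ω} [IsProbabilityMeasure P]

lemma fd_pull_out {𝔪 : MeasurableSpace Ω} (h𝔪 : 𝔪 ≤ mΩ) {f g v : Ω → ℝ}
    (hf : StronglyMeasurable[𝔪] f) (hfg : Integrable (fun ω => f ω * g ω) P)
    (hg : Integrable g P) (hv : v =ᵐ[P] P[g|𝔪]) :
    ∫ ω, f ω * g ω ∂P = ∫ ω, f ω * v ω ∂P := by
  have hfg' : Integrable (f * g) P := hfg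
  have h1 : P[f * g|𝔪] =ᵐ[P] f * P[g|𝔪] := condExp_mul_of_stronglyMeasurable_left hf hfg' hg
  calc ∫ ω, f ω * g ω ∂P = ∫ ω, (P[f * g|𝔪]) ω ∂P :=
        (integral_condExp (μ := P) (f := f * g) h𝔪).symm
    _ = ∫ ω, f ω * v ω ∂P := by
        refine integral_congr_ae ?_
        filter_upwards [h1, hv] with ω h1ω hvω
        simp only [h1ω, Pi.mul_apply, hvω]

set_option maxHeartbeats 2000000 in
/-- The pointwise algebraic identity underlying the double-robustness decomposition. -/
lemma fd_pointwise (m mh : ℝ→ℝ→𝒞→ℝ) (e eh : ℝ→𝒞→ℝ) (q qh : ℝ→ℝ→𝒞→ℝ) (c : 𝒞)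
    (he0 : e 0 c = 1 - e 1 c) (hq00 : q 0 0 c = 1 - q 1 0 c) (hq01 : q 0 1 c = 1 - q 1 1 c)
    (he1 : e 1 c ≠ 0) (he1' : 1 - e 1 c ≠ 0) (heh0 : eh 0 c ≠ 0) (heh1 : eh 1 c ≠ 0)
    (hq10 : q 1 0 c ≠ 0) (hq10' : 1 - q 1 0 c ≠ 0) (hq11 : q 1 1 c ≠ 0) (hq11' : 1 - q 1 1 c ≠ 0)
    (hqh00 : qh 0 0 c ≠ 0) (hqh01 : qh 0 1 c ≠ 0) (hqh10 : qh 1 0 c ≠ 0) (hqh11 : qh 1 1 c ≠ 0)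
    (xb : ℝ) (hxb : xb = 0 ∨ xb = 1) :
    (fdPhi mh eh qh xb 0 0 c (m 0 0 c) * q 0 0 c * e 0 c
      + fdPhi mh eh qh xb 0 1 c (m 0 1 c) * q 0 1 c * e 1 c
      + fdPhi mh eh qh xb 1 0 c (m 1 0 c) * q 1 0 c * e 0 c
      + fdPhi mh eh qh xb 1 1 c (m 1 1 c) * q 1 1 c * e 1 c)
     - (fdPhi m e q xb 0 0 c (m 0 0 c) * q 0 0 c * e 0 c
      + fdPhi m e q xb 0 1 c (m 0 1 c) * q 0 1 c * e 1 c
      + fdPhi m e q xb 1 0 c (m 1 0 c) * q 1 0 c * e 0 c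
      + fdPhi m e q xb 1 1 c (m 1 1 c) * q 1 1 c * e 1 c)
    = ((mh 0 0 c - m 0 0 c) * (fdXi q xb 0 0 c - fdXi qh xb 0 0 c) * q 0 0 c * e 0 c
      + (mh 0 1 c - m 0 1 c) * (fdXi q xb 0 1 c - fdXi qh xb 0 1 c) * q 0 1 c * e 1 c
      + (mh 1 0 c - m 1 0 c) * (fdXi q xb 1 0 c - fdXi qh xb 1 0 c) * q 1 0 c * e 0 c
      + (mh 1 1 c - m 1 1 c) * (fdXi q xb 1 1 c - fdXi qh xb 1 1 c) * q 1 1 c * e 1 c)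
    + ((fdPi eh xb 0 c - fdPi e xb 0 c) * (fdNu mh q eh 0 c - fdNu mh qh eh 0 c) * q 0 0 c * e 0 c
      + (fdPi eh xb 1 c - fdPi e xb 1 c) * (fdNu mh q eh 1 c - fdNu mh qh eh 1 c) * q 0 1 c * e 1 c
      + (fdPi eh xb 0 c - fdPi e xb 0 c) * (fdNu mh q eh 0 c - fdNu mh qh eh 0 c) * q 1 0 c * e 0 c
      + (fdPi eh xb 1 c - fdPi e xb 1 c) * (fdNu mh q eh 1 c - fdNu mh qh eh 1 c) * q 1 1 c * e 1 c)
    + (mh 0 0 c * (q 0 xb c - qh 0 xb c) * (eh 0 c - e 0 c)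
      + mh 0 1 c * (q 0 xb c - qh 0 xb c) * (eh 1 c - e 1 c)
      + mh 1 0 c * (q 1 xb c - qh 1 xb c) * (eh 0 c - e 0 c)
      + mh 1 1 c * (q 1 xb c - qh 1 xb c) * (eh 1 c - e 1 c)) := by
  have h01 : ((0:ℝ) = 1) = False := by norm_num
  have h10 : ((1:ℝ) = 0) = False := by norm_num
  have h00 : ((0:ℝ) = 0) = True := by norm_num
  have h11 : ((1:ℝ) = 1) = True := by norm_num
  rcases hxb with rfl | rfl <;>
    · simp only [fdPhi, fdXi, fdPi, fdR, fdNu, fdS, h01, h10, h00, h11, if_true, if_false]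
      rw [he0, hq00, hq01]
      field_simp
      ring

end FDAux

set_option maxHeartbeats 4000000 in
/-- **FDPO double robustness.** For arbitrary bounded measurable estimates
(m̂,ê,q̂) with δ ≤ ê, q̂ ≤ 1−δ, the bias of the front-door pseudo-outcome decomposes exactly
into second-order products of nuisance errors. -/
theorem fd_pseudo_outcome_double_robustness
    {Ω : Type*} [MeasurableSpace Ω] [MeasurableSpace 𝒞]
    (P : Measure Ω) [IsProbabilityMeasure P]
    (C : Ω → 𝒞) (X Z Y : Ω → ℝ)
    (hC : Measurable C) (hX : Measurable X) (hZ : Measurable Z) (hY : Measurable Y)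
    (hX01 : ∀ ω, X ω = 0 ∨ X ω = 1) (hZ01 : ∀ ω, Z ω = 0 ∨ Z ω = 1)
    (hY2 : MemLp Y 2 P)
    (m : ℝ → ℝ → 𝒞 → ℝ) (e : ℝ → 𝒞 → ℝ) (q : ℝ → ℝ → 𝒞 → ℝ)
    (hm_meas : Measurable fun p : ℝ × ℝ × 𝒞 => m p.1 p.2.1 p.2.2)
    (he_meas : Measurable fun p : ℝ × 𝒞 => e p.1 p.2)
    (hq_meas : Measurable fun p : ℝ × ℝ × 𝒞 => q p.1 p.2.1 p.2.2)
    (hm : (fun ω => m (Z ω) (X ω) (C ω))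
        =ᵐ[P] P[Y | MeasurableSpace.comap (fun ω => (Z ω, X ω, C ω)) inferInstance])
    (he1 : (fun ω => e 1 (C ω)) =ᵐ[P] P[X | MeasurableSpace.comap C inferInstance])
    (he0 : ∀ c, e 0 c = 1 - e 1 c)
    (hq1 : (fun ω => q 1 (X ω) (C ω))
        =ᵐ[P] P[Z | MeasurableSpace.comap (fun ω => (X ω, C ω)) inferInstance])
    (hq0 : ∀ x c, q 0 x c = 1 - q 1 x c)
    (δ : ℝ) (hδ0 : 0 < δ) (hδ2 : δ < 1 / 2)
    (he_pos : ∀ x c, (x = 0 ∨ x = 1) → δ ≤ e x c ∧ e x c ≤ 1 - δ)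
    (hq_pos : ∀ z x c, (z = 0 ∨ z = 1) → (x = 0 ∨ x = 1) → δ ≤ q z x c ∧ q z x c ≤ 1 - δ)
    -- arbitrary bounded measurable estimates (m̂,ê,q̂)
    (mh : ℝ → ℝ → 𝒞 → ℝ) (eh : ℝ → 𝒞 → ℝ) (qh : ℝ → ℝ → 𝒞 → ℝ)
    (hmh_meas : Measurable fun p : ℝ × ℝ × 𝒞 => mh p.1 p.2.1 p.2.2)
    (heh_meas : Measurable fun p : ℝ × 𝒞 => eh p.1 p.2)
    (hqh_meas : Measurable fun p : ℝ × ℝ × 𝒞 => qh p.1 p.2.1 p.2.2)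
    (Bm : ℝ) (hmh_bdd : ∀ z x c, |mh z x c| ≤ Bm)
    (heh_pos : ∀ x c, (x = 0 ∨ x = 1) → δ ≤ eh x c ∧ eh x c ≤ 1 - δ)
    (hqh_pos : ∀ z x c, (z = 0 ∨ z = 1) → (x = 0 ∨ x = 1) → δ ≤ qh z x c ∧ qh z x c ≤ 1 - δ)
    (xb : ℝ) (hxb : xb = 0 ∨ xb = 1) :
    (∫ ω, fdPhi mh eh qh xb (Z ω) (X ω) (C ω) (Y ω) ∂P)
        - (∫ ω, fdPhi m e q xb (Z ω) (X ω) (C ω) (Y ω) ∂P)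
      = (∫ ω, (mh (Z ω) (X ω) (C ω) - m (Z ω) (X ω) (C ω)) *
            (fdXi q xb (Z ω) (X ω) (C ω) - fdXi qh xb (Z ω) (X ω) (C ω)) ∂P)
        + (∫ ω, (fdPi eh xb (X ω) (C ω) - fdPi e xb (X ω) (C ω)) *
            (fdNu mh q eh (X ω) (C ω) - fdNu mh qh eh (X ω) (C ω)) ∂P)
        + ((∫ ω, mh 0 0 (C ω) * (q 0 xb (C ω) - qh 0 xb (C ω)) * (eh 0 (C ω) - e 0 (C ω)) ∂P)
          + (∫ ω, mh 0 1 (C ω) * (q 0 xb (C ω) - qh 0 xb (C ω)) * (eh 1 (C ω) - e 1 (C ω)) ∂P)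
          + (∫ ω, mh 1 0 (C ω) * (q 1 xb (C ω) - qh 1 xb (C ω)) * (eh 0 (C ω) - e 0 (C ω)) ∂P)
          + (∫ ω, mh 1 1 (C ω) * (q 1 xb (C ω) - qh 1 xb (C ω)) * (eh 1 (C ω) - e 1 (C ω)) ∂P)) := by
  classical
  -- ======== basic measurability ========
  have hZXC : Measurable fun ω => (Z ω, X ω, C ω) := hZ.prodMk (hX.prodMk hC)
  have hXC : Measurable fun ω => (X ω, C ω) := hX.prodMk hC
  have me3 : ∀ (F : ℝ → ℝ → 𝒞 → ℝ), Measurable (fun p : ℝ × ℝ × 𝒞 => F p.1 p.2.1 p.2.2) →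
      ∀ z x : ℝ, Measurable fun c : 𝒞 => F z x c := fun F hF z x =>
    hF.comp (measurable_const.prodMk (measurable_const.prodMk measurable_id))
  have me2 : ∀ (F : ℝ → 𝒞 → ℝ), Measurable (fun p : ℝ × 𝒞 => F p.1 p.2) →
      ∀ x : ℝ, Measurable fun c : 𝒞 => F x c := fun F hF x =>
    hF.comp (measurable_const.prodMk measurable_id)
  have meO : ∀ (F : ℝ → ℝ → 𝒞 → ℝ), Measurable (fun p : ℝ × ℝ × 𝒞 => F p.1 p.2.1 p.2.2) →
      ∀ (u v : Ω → ℝ), Measurable u → Measurable v →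
      Measurable fun ω => F (u ω) (v ω) (C ω) := fun F hF u v hu hv =>
    hF.comp (hu.prodMk (hv.prodMk hC))
  have meO2 : ∀ (F : ℝ → 𝒞 → ℝ), Measurable (fun p : ℝ × 𝒞 => F p.1 p.2) →
      ∀ (u : Ω → ℝ), Measurable u → Measurable fun ω => F (u ω) (C ω) := fun F hF u hu =>
    hF.comp (hu.prodMk hC)
  have pm3 : ∀ (F : ℝ → ℝ → 𝒞 → ℝ), Measurable (fun p : ℝ × ℝ × 𝒞 => F p.1 p.2.1 p.2.2) →
      ∀ (a b : (ℝ × ℝ × 𝒞) → ℝ), Measurable a → Measurable b →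
      Measurable fun p : ℝ × ℝ × 𝒞 => F (a p) (b p) p.2.2 := fun F hF a b ha hb =>
    hF.comp (ha.prodMk (hb.prodMk measurable_snd.snd))
  have pm2 : ∀ (F : ℝ → 𝒞 → ℝ), Measurable (fun p : ℝ × 𝒞 => F p.1 p.2) →
      ∀ (a : (ℝ × ℝ × 𝒞) → ℝ), Measurable a →
      Measurable fun p : ℝ × ℝ × 𝒞 => F (a p) p.2.2 := fun F hF a ha =>
    hF.comp (ha.prodMk measurable_snd.snd)
  have hind : ∀ a : ℝ, Measurable fun t : ℝ => if t = a then (1:ℝ) else 0 := fun a =>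
    measurable_const.ite measurableSet_eq measurable_const
  have hprojC : @Measurable Ω 𝒞 (MeasurableSpace.comap C inferInstance) _ C :=
    Measurable.of_comap_le le_rfl
  have hprojXC : @Measurable Ω (ℝ × 𝒞)
      (MeasurableSpace.comap (fun ω => (X ω, C ω)) inferInstance) _ (fun ω => (X ω, C ω)) :=
    Measurable.of_comap_le le_rfl
  have hprojZXC : @Measurable Ω (ℝ × ℝ × 𝒞)
      (MeasurableSpace.comap (fun ω => (Z ω, X ω, C ω)) inferInstance) _
      (fun ω => (Z ω, X ω, C ω)) := Measurable.of_comap_le le_rfl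
  -- ======== bounds toolkit ========
  set B : ℝ := max Bm 0 with hBdef
  have hB0 : (0:ℝ) ≤ B := le_max_right _ _
  have hmhB : ∀ z x c, |mh z x c| ≤ B := fun z x c => (hmh_bdd z x c).trans (le_max_left _ _)
  have habs1 : ∀ {t : ℝ}, δ ≤ t → t ≤ 1 - δ → |t| ≤ 1 := fun {t} h1 h2 => by
    rw [abs_of_nonneg (le_trans hδ0.le h1)]; linarith
  have hne0 : ∀ {t : ℝ}, δ ≤ t → t ≠ 0 := fun {t} h1 => ne_of_gt (lt_of_lt_of_le hδ0 h1)
  have hdivb : ∀ {a b K : ℝ}, 0 ≤ K → |a| ≤ K → δ ≤ b → |a / b| ≤ K / δ := by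
    intro a b K hK ha hb
    rw [abs_div]
    refine div_le_div₀ hK ha hδ0 ?_
    rw [abs_of_nonneg (le_trans hδ0.le hb)]; exact hb
  have habsmul : ∀ {a b Ka Kb : ℝ}, 0 ≤ Ka → |a| ≤ Ka → |b| ≤ Kb → |a * b| ≤ Ka * Kb := by
    intro a b Ka Kb hKa ha hb
    rw [abs_mul]
    exact mul_le_mul ha hb (abs_nonneg _) hKa
  have tri2 : ∀ a b : ℝ, |a - b| ≤ |a| + |b| := fun a b => by
    calc |a - b| = |a + -b| := by ring_nf
      _ ≤ |a| + |-b| := abs_add_le _ _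
      _ = |a| + |b| := by rw [abs_neg]
  have hZb : ∀ ω, |Z ω| ≤ 1 := fun ω => by rcases hZ01 ω with h | h <;> simp [h]
  have hXb : ∀ ω, |X ω| ≤ 1 := fun ω => by rcases hX01 ω with h | h <;> simp [h]
  have hqb : ∀ (z x : ℝ) (c : 𝒞), (z = 0 ∨ z = 1) → (x = 0 ∨ x = 1) → |q z x c| ≤ 1 :=
    fun z x c hz hx => habs1 (hq_pos z x c hz hx).1 (hq_pos z x c hz hx).2
  have hqhb : ∀ (z x : ℝ) (c : 𝒞), (z = 0 ∨ z = 1) → (x = 0 ∨ x = 1) → |qh z x c| ≤ 1 :=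
    fun z x c hz hx => habs1 (hqh_pos z x c hz hx).1 (hqh_pos z x c hz hx).2
  have heb : ∀ (x : ℝ) (c : 𝒞), (x = 0 ∨ x = 1) → |e x c| ≤ 1 :=
    fun x c hx => habs1 (he_pos x c hx).1 (he_pos x c hx).2
  have hehb : ∀ (x : ℝ) (c : 𝒞), (x = 0 ∨ x = 1) → |eh x c| ≤ 1 :=
    fun x c hx => habs1 (heh_pos x c hx).1 (heh_pos x c hx).2
  have hindb : ∀ (x : ℝ), |if x = xb then (1:ℝ) else 0| ≤ 1 := fun x => by
    split <;> simp
  -- ======== integrability toolkit ========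
  have hIB : ∀ {f g : Ω → ℝ} (K : ℝ), Integrable f P → AEStronglyMeasurable g P →
      (∀ ω, |g ω| ≤ K) → Integrable (fun ω => f ω * g ω) P := by
    intro f g K hf hg hK
    refine Integrable.mono' (hf.abs.mul_const K) (hf.1.mul hg)
      (Filter.Eventually.of_forall fun ω => ?_)
    rw [Real.norm_eq_abs, abs_mul]
    exact mul_le_mul_of_nonneg_left (hK ω) (abs_nonneg _)
  have hBI : ∀ {f g : Ω → ℝ} (K : ℝ), Integrable g P → AEStronglyMeasurable f P →
      (∀ ω, |f ω| ≤ K) → Integrable (fun ω => f ω * g ω) P := by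
    intro f g K hg hf hK
    have := hIB K hg hf hK
    simpa [mul_comm] using this
  have hbddInt : ∀ {g : Ω → ℝ} (K : ℝ), AEStronglyMeasurable g P → (∀ ω, |g ω| ≤ K) →
      Integrable g P := by
    intro g K hg hK
    exact Integrable.mono' (integrable_const K) hg
      (Filter.Eventually.of_forall fun ω => by rw [Real.norm_eq_abs]; exact hK ω)
  have hYint : Integrable Y P := hY2.integrable one_le_two
  have hmZXC_meas : Measurable fun ω => m (Z ω) (X ω) (C ω) := hm_meas.comp hZXC
  have hmint : Integrable (fun ω => m (Z ω) (X ω) (C ω)) P := integrable_condExp.congr hm.symm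
  have hZint : Integrable Z P := hbddInt 1 hZ.aestronglyMeasurable hZb
  have hXint : Integrable X P := hbddInt 1 hX.aestronglyMeasurable hXb
  -- ======== tower steps ========
  have ZT : ∀ f : Ω → ℝ,
      StronglyMeasurable[MeasurableSpace.comap (fun ω => (X ω, C ω)) inferInstance] f →
      Integrable f P → ∫ ω, f ω * Z ω ∂P = ∫ ω, f ω * q 1 (X ω) (C ω) ∂P := fun f hfm hfi =>
    fd_pull_out hXC.comap_le hfm (hIB 1 hfi hZ.aestronglyMeasurable hZb) hZint hq1
  have XT : ∀ f : Ω → ℝ,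
      StronglyMeasurable[MeasurableSpace.comap C inferInstance] f →
      Integrable f P → ∫ ω, f ω * X ω ∂P = ∫ ω, f ω * e 1 (C ω) ∂P := fun f hfm hfi =>
    fd_pull_out hC.comap_le hfm (hIB 1 hfi hX.aestronglyMeasurable hXb) hXint he1
  -- ======== the reduction lemma (tower over Z then X) ========
  have RED : ∀ H : ℝ → ℝ → 𝒞 → ℝ, Measurable (fun p : ℝ × ℝ × 𝒞 => H p.1 p.2.1 p.2.2) →
      (∀ z x : ℝ, (z = 0 ∨ z = 1) → (x = 0 ∨ x = 1) → Integrable (fun ω => H z x (C ω)) P) →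
      ∫ ω, H (Z ω) (X ω) (C ω) ∂P
        = ∫ ω, (H 0 0 (C ω) * q 0 0 (C ω) * e 0 (C ω) + H 0 1 (C ω) * q 0 1 (C ω) * e 1 (C ω)
            + H 1 0 (C ω) * q 1 0 (C ω) * e 0 (C ω)
            + H 1 1 (C ω) * q 1 1 (C ω) * e 1 (C ω)) ∂P := by
    intro H hHm hHi
    have hH00 : Measurable fun c => H 0 0 c := me3 H hHm 0 0
    have hH01 : Measurable fun c => H 0 1 c := me3 H hHm 0 1
    have hH10 : Measurable fun c => H 1 0 c := me3 H hHm 1 0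
    have hH11 : Measurable fun c => H 1 1 c := me3 H hHm 1 1
    have hXb' : ∀ ω, |1 - X ω| ≤ 1 := fun ω => by rcases hX01 ω with h | h <;> simp [h]
    have hq1XC_meas : Measurable fun ω => q 1 (X ω) (C ω) :=
      meO q hq_meas (fun _ => 1) X measurable_const hX
    have hq1XCb : ∀ ω, |q 1 (X ω) (C ω)| ≤ 1 := fun ω => hqb 1 _ _ (Or.inr rfl) (hX01 ω)
    set f0 : Ω → ℝ := fun ω => (1 - X ω) * H 0 0 (C ω) + X ω * H 0 1 (C ω) with hf0def
    set f1 : Ω → ℝ := fun ω => (1 - X ω) * H 1 0 (C ω) + X ω * H 1 1 (C ω) with hf1def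
    have hf0i : Integrable f0 P :=
      (hBI 1 (hHi 0 0 (Or.inl rfl) (Or.inl rfl)) (measurable_const.sub hX).aestronglyMeasurable
        hXb').add (hBI 1 (hHi 0 1 (Or.inl rfl) (Or.inr rfl)) hX.aestronglyMeasurable hXb)
    have hf1i : Integrable f1 P :=
      (hBI 1 (hHi 1 0 (Or.inr rfl) (Or.inl rfl)) (measurable_const.sub hX).aestronglyMeasurable
        hXb').add (hBI 1 (hHi 1 1 (Or.inr rfl) (Or.inr rfl)) hX.aestronglyMeasurable hXb)
    have hf0m : StronglyMeasurable[MeasurableSpace.comap (fun ω => (X ω, C ω)) inferInstance]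
        f0 := by
      have hF : Measurable fun p : ℝ × 𝒞 => (1 - p.1) * H 0 0 p.2 + p.1 * H 0 1 p.2 :=
        ((measurable_const.sub measurable_fst).mul (hH00.comp measurable_snd)).add
          (measurable_fst.mul (hH01.comp measurable_snd))
      exact (hF.comp hprojXC).stronglyMeasurable
    have hf1m : StronglyMeasurable[MeasurableSpace.comap (fun ω => (X ω, C ω)) inferInstance]
        f1 := by
      have hF : Measurable fun p : ℝ × 𝒞 => (1 - p.1) * H 1 0 p.2 + p.1 * H 1 1 p.2 :=
        ((measurable_const.sub measurable_fst).mul (hH10.comp measurable_snd)).add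
          (measurable_fst.mul (hH11.comp measurable_snd))
      exact (hF.comp hprojXC).stronglyMeasurable
    have e1step : (fun ω => H (Z ω) (X ω) (C ω))
        = fun ω => f0 ω + (f1 ω - f0 ω) * Z ω := by
      funext ω
      rcases hZ01 ω with hz | hz <;> rcases hX01 ω with hx | hx <;>
        simp only [hf0def, hf1def, hz, hx] <;> ring
    have hdi : Integrable (fun ω => f1 ω - f0 ω) P := hf1i.sub hf0i
    have hdm : StronglyMeasurable[MeasurableSpace.comap (fun ω => (X ω, C ω)) inferInstance]
        (fun ω => f1 ω - f0 ω) := hf1m.sub hf0m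
    rw [e1step,
      integral_add hf0i (hIB 1 hdi hZ.aestronglyMeasurable hZb),
      ZT (fun ω => f1 ω - f0 ω) hdm hdi,
      ← integral_add hf0i (hIB 1 hdi hq1XC_meas.aestronglyMeasurable hq1XCb)]
    set A0 : 𝒞 → ℝ := fun c => H 0 0 c * q 0 0 c + H 1 0 c * q 1 0 c with hA0def
    set A1 : 𝒞 → ℝ := fun c => H 0 1 c * q 0 1 c + H 1 1 c * q 1 1 c with hA1def
    have hA0m : Measurable A0 := (hH00.mul (me3 q hq_meas 0 0)).add (hH10.mul (me3 q hq_meas 1 0))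
    have hA1m : Measurable A1 := (hH01.mul (me3 q hq_meas 0 1)).add (hH11.mul (me3 q hq_meas 1 1))
    have hA0i : Integrable (fun ω => A0 (C ω)) P :=
      (hIB 1 (hHi 0 0 (Or.inl rfl) (Or.inl rfl))
        ((me3 q hq_meas 0 0).comp hC).aestronglyMeasurable
        (fun ω => hqb 0 0 _ (Or.inl rfl) (Or.inl rfl))).add
      (hIB 1 (hHi 1 0 (Or.inr rfl) (Or.inl rfl))
        ((me3 q hq_meas 1 0).comp hC).aestronglyMeasurable
        (fun ω => hqb 1 0 _ (Or.inr rfl) (Or.inl rfl)))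
    have hA1i : Integrable (fun ω => A1 (C ω)) P :=
      (hIB 1 (hHi 0 1 (Or.inl rfl) (Or.inr rfl))
        ((me3 q hq_meas 0 1).comp hC).aestronglyMeasurable
        (fun ω => hqb 0 1 _ (Or.inl rfl) (Or.inr rfl))).add
      (hIB 1 (hHi 1 1 (Or.inr rfl) (Or.inr rfl))
        ((me3 q hq_meas 1 1).comp hC).aestronglyMeasurable
        (fun ω => hqb 1 1 _ (Or.inr rfl) (Or.inr rfl)))
    have e2step : (fun ω => f0 ω + (f1 ω - f0 ω) * q 1 (X ω) (C ω))
        = fun ω => A0 (C ω) + (A1 (C ω) - A0 (C ω)) * X ω := by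
      funext ω
      rcases hX01 ω with hx | hx <;>
        simp only [hf0def, hf1def, hA0def, hA1def, hx, hq0] <;> ring
    have hdAi : Integrable (fun ω => A1 (C ω) - A0 (C ω)) P := hA1i.sub hA0i
    have hdAm : StronglyMeasurable[MeasurableSpace.comap C inferInstance]
        (fun ω => A1 (C ω) - A0 (C ω)) := ((hA1m.sub hA0m).comp hprojC).stronglyMeasurable
    rw [e2step,
      integral_add hA0i (hIB 1 hdAi hX.aestronglyMeasurable hXb),
      XT (fun ω => A1 (C ω) - A0 (C ω)) hdAm hdAi,
      ← integral_add hA0i (hIB 1 hdAi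
        (meO2 e he_meas (fun _ => 1) measurable_const).aestronglyMeasurable
        (fun ω => heb 1 _ (Or.inr rfl)))]
    refine integral_congr_ae (Filter.Eventually.of_forall fun ω => ?_)
    simp only [hA0def, hA1def, he0]
    ring
  -- ======== integrability of slices of the true m ========
  have Mslice : ∀ z0 x0 : ℝ, (z0 = 0 ∨ z0 = 1) → (x0 = 0 ∨ x0 = 1) →
      Integrable (fun ω => m z0 x0 (C ω)) P := by
    intro z0 x0 hz0 hx0
    have hmm : Measurable fun c => m z0 x0 c := me3 m hm_meas z0 x0
    set g : Ω → ℝ := fun ω => |m z0 x0 (C ω)| with hgdef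
    have hgm : Measurable g := (hmm.comp hC).abs
    have hg0 : ∀ ω, 0 ≤ g ω := fun ω => abs_nonneg _
    set K0 : ℝ := ∫ ω, |m (Z ω) (X ω) (C ω)| ∂P with hK0def
    have key : ∀ n : ℕ, ∫ ω, min (g ω) n ∂P ≤ K0 / (δ * δ) := by
      intro n
      set T : Ω → ℝ := fun ω => min (g ω) n with hTdef
      have hTm : Measurable T := hgm.min measurable_const
      have hT0 : ∀ ω, 0 ≤ T ω := fun ω => le_min (hg0 ω) (Nat.cast_nonneg n)
      have hTb : ∀ ω, |T ω| ≤ (n:ℝ) := fun ω => by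
        rw [abs_of_nonneg (hT0 ω)]; exact min_le_right _ _
      have hTi : Integrable T P := hbddInt _ hTm.aestronglyMeasurable hTb
      set H : ℝ → ℝ → 𝒞 → ℝ := fun z x c =>
        (if z = z0 then (1:ℝ) else 0) * (if x = x0 then (1:ℝ) else 0) * min (|m z0 x0 c|) n
        with hHdef
      have hHm : Measurable (fun p : ℝ × ℝ × 𝒞 => H p.1 p.2.1 p.2.2) := by
        simp only [hHdef]
        exact (((hind z0).comp measurable_fst).mul
          ((hind x0).comp measurable_snd.fst)).mul
          (((hmm.comp measurable_snd.snd).abs).min measurable_const)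
      have hHbd : ∀ z x : ℝ, ∀ c, |H z x c| ≤ (n:ℝ) := by
        intro z x c
        simp only [hHdef]
        have h1 : |min (|m z0 x0 c|) (n:ℝ)| ≤ (n:ℝ) := by
          rw [abs_of_nonneg (le_min (abs_nonneg _) (Nat.cast_nonneg n))]
          exact min_le_right _ _
        calc |(if z = z0 then (1:ℝ) else 0) * (if x = x0 then (1:ℝ) else 0)
              * min (|m z0 x0 c|) n|
            ≤ 1 * 1 * (n:ℝ) := by
              refine habsmul (by norm_num) (habsmul zero_le_one ?_ ?_) h1 <;> split <;> norm_num
          _ = (n:ℝ) := by ring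
      have hHnn : ∀ z x : ℝ, ∀ c, 0 ≤ H z x c := by
        intro z x c
        simp only [hHdef]
        refine mul_nonneg (mul_nonneg ?_ ?_) (le_min (abs_nonneg _) (Nat.cast_nonneg n)) <;>
          split <;> norm_num
      have hHi : ∀ z x : ℝ, (z = 0 ∨ z = 1) → (x = 0 ∨ x = 1) →
          Integrable (fun ω => H z x (C ω)) P := fun z x _ _ =>
        hbddInt (n : ℝ) ((me3 H hHm z x).comp hC).aestronglyMeasurable fun ω => hHbd z x _
      have hred := RED H hHm hHi
      have hcomp_le : ∀ ω, H (Z ω) (X ω) (C ω) ≤ |m (Z ω) (X ω) (C ω)| := by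
        intro ω
        simp only [hHdef]
        by_cases h1 : Z ω = z0
        · by_cases h2 : X ω = x0
          · rw [if_pos h1, if_pos h2, h1, h2]
            calc (1:ℝ) * 1 * min (|m z0 x0 (C ω)|) n = min (|m z0 x0 (C ω)|) n := by ring
              _ ≤ |m z0 x0 (C ω)| := min_le_left _ _
          · rw [if_neg h2]
            simpa using abs_nonneg (m (Z ω) (X ω) (C ω))
        · rw [if_neg h1]
          simpa using abs_nonneg (m (Z ω) (X ω) (C ω))
      have hcomp_int : Integrable (fun ω => H (Z ω) (X ω) (C ω)) P :=
        hbddInt (n:ℝ) ((hHm.comp hZXC).aestronglyMeasurable) fun ω => hHbd _ _ _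
      have hup : ∫ ω, H (Z ω) (X ω) (C ω) ∂P ≤ K0 :=
        integral_mono hcomp_int hmint.abs hcomp_le
      have hlow : δ * δ * ∫ ω, T ω ∂P ≤ ∫ ω, H (Z ω) (X ω) (C ω) ∂P := by
        rw [hred, ← integral_const_mul]
        have hTqe_int : Integrable
            (fun ω => H 0 0 (C ω) * q 0 0 (C ω) * e 0 (C ω)
              + H 0 1 (C ω) * q 0 1 (C ω) * e 1 (C ω)
              + H 1 0 (C ω) * q 1 0 (C ω) * e 0 (C ω)
              + H 1 1 (C ω) * q 1 1 (C ω) * e 1 (C ω)) P := by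
          refine Integrable.add (Integrable.add (Integrable.add ?_ ?_) ?_) ?_ <;>
          · refine hIB 1 (hIB 1 (hHi _ _ (by norm_num) (by norm_num))
              ((me3 q hq_meas _ _).comp hC).aestronglyMeasurable
              (fun ω => hqb _ _ _ (by norm_num) (by norm_num)))
              ((me2 e he_meas _).comp hC).aestronglyMeasurable
              (fun ω => heb _ _ (by norm_num))
        refine integral_mono (hTi.const_mul _) hTqe_int fun ω => ?_
        have hHT : H z0 x0 (C ω) = T ω := by
          simp only [hHdef, hTdef, hgdef, eq_self_iff_true, if_true]
          ring
        have hprod : δ * δ ≤ q z0 x0 (C ω) * e x0 (C ω) :=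
          mul_le_mul (hq_pos z0 x0 _ hz0 hx0).1 (he_pos x0 _ hx0).1 hδ0.le
            (hδ0.le.trans (hq_pos z0 x0 _ hz0 hx0).1)
        have tnn : ∀ (z x : ℝ), (z = 0 ∨ z = 1) → (x = 0 ∨ x = 1) →
            0 ≤ H z x (C ω) * q z x (C ω) * e x (C ω) := fun z x hz hx =>
          mul_nonneg (mul_nonneg (hHnn z x _) (hδ0.le.trans (hq_pos z x _ hz hx).1))
            (hδ0.le.trans (he_pos x _ hx).1)
        have h2 : δ * δ * T ω ≤ H z0 x0 (C ω) * q z0 x0 (C ω) * e x0 (C ω) := by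
          rw [hHT]
          nlinarith [mul_le_mul_of_nonneg_right hprod (hT0 ω)]
        have hpick : H z0 x0 (C ω) * q z0 x0 (C ω) * e x0 (C ω)
            ≤ H 0 0 (C ω) * q 0 0 (C ω) * e 0 (C ω) + H 0 1 (C ω) * q 0 1 (C ω) * e 1 (C ω)
              + H 1 0 (C ω) * q 1 0 (C ω) * e 0 (C ω)
              + H 1 1 (C ω) * q 1 1 (C ω) * e 1 (C ω) := by
          rcases hz0 with h0 | h0 <;> rcases hx0 with h1 | h1 <;>
          · rw [h0, h1]
            linarith [tnn 0 0 (Or.inl rfl) (Or.inl rfl), tnn 0 1 (Or.inl rfl) (Or.inr rfl),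
              tnn 1 0 (Or.inr rfl) (Or.inl rfl), tnn 1 1 (Or.inr rfl) (Or.inr rfl)]
        linarith [h2, hpick]
      rw [le_div_iff₀ (mul_pos hδ0 hδ0)]
      nlinarith [hlow, hup]
    refine ⟨(hmm.comp hC).aestronglyMeasurable, ?_⟩
    rw [hasFiniteIntegral_iff_norm]
    have hKnn : (0:ℝ) ≤ K0 / (δ * δ) :=
      div_nonneg (integral_nonneg fun ω => abs_nonneg _) (mul_pos hδ0 hδ0).le
    calc ∫⁻ ω, ENNReal.ofReal ‖m z0 x0 (C ω)‖ ∂P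
        = ∫⁻ ω, ⨆ n : ℕ, ENNReal.ofReal (min (g ω) n) ∂P := by
          refine lintegral_congr fun ω => ?_
          refine le_antisymm ?_ ?_
          · rw [Real.norm_eq_abs]
            refine le_iSup_of_le ⌈g ω⌉₊ (ENNReal.ofReal_le_ofReal ?_)
            exact le_min le_rfl (Nat.le_ceil _)
          · refine iSup_le fun n => ENNReal.ofReal_le_ofReal ?_
            rw [Real.norm_eq_abs]
            exact min_le_left _ _
      _ = ⨆ n : ℕ, ∫⁻ ω, ENNReal.ofReal (min (g ω) n) ∂P := by
          refine lintegral_iSup (fun n => (hgm.min measurable_const).ennreal_ofReal) ?_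
          intro i j hij ω
          exact ENNReal.ofReal_le_ofReal (min_le_min le_rfl (Nat.cast_le.mpr hij))
      _ ≤ ENNReal.ofReal (K0 / (δ * δ)) := by
          refine iSup_le fun n => ?_
          have hint : Integrable (fun ω => min (g ω) n) P := hbddInt (n:ℝ)
            ((hgm.min measurable_const).aestronglyMeasurable) (fun ω => by
              rw [abs_of_nonneg (le_min (hg0 ω) (Nat.cast_nonneg n))]
              exact min_le_right _ _)
          rw [← ofReal_integral_eq_lintegral_ofReal hint
            (Filter.Eventually.of_forall fun ω => le_min (hg0 ω) (Nat.cast_nonneg n))]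
          exact ENNReal.ofReal_le_ofReal (key n)
      _ < ⊤ := ENNReal.ofReal_lt_top
  
  -- ======== integrability of mixed compositions of m ========
  have hZb' : ∀ ω, |1 - Z ω| ≤ 1 := fun ω => by rcases hZ01 ω with h | h <;> simp [h]
  have hXb' : ∀ ω, |1 - X ω| ≤ 1 := fun ω => by rcases hX01 ω with h | h <;> simp [h]
  have hint_mZx : ∀ x' : ℝ, (x' = 0 ∨ x' = 1) → Integrable (fun ω => m (Z ω) x' (C ω)) P := by
    intro x' hx'
    have e1 : (fun ω => m (Z ω) x' (C ω))
        = fun ω => (1 - Z ω) * m 0 x' (C ω) + Z ω * m 1 x' (C ω) := by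
      funext ω; rcases hZ01 ω with h | h <;> simp [h]
    rw [e1]
    exact (hBI 1 (Mslice 0 x' (Or.inl rfl) hx')
        (measurable_const.sub hZ).aestronglyMeasurable hZb').add
      (hBI 1 (Mslice 1 x' (Or.inr rfl) hx') hZ.aestronglyMeasurable hZb)
  have hint_mzX : ∀ z' : ℝ, (z' = 0 ∨ z' = 1) → Integrable (fun ω => m z' (X ω) (C ω)) P := by
    intro z' hz'
    have e1 : (fun ω => m z' (X ω) (C ω))
        = fun ω => (1 - X ω) * m z' 0 (C ω) + X ω * m z' 1 (C ω) := by
      funext ω; rcases hX01 ω with h | h <;> simp [h]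
    rw [e1]
    exact (hBI 1 (Mslice z' 0 hz' (Or.inl rfl))
        (measurable_const.sub hX).aestronglyMeasurable hXb').add
      (hBI 1 (Mslice z' 1 hz' (Or.inr rfl)) hX.aestronglyMeasurable hXb)
  -- ======== bounds on fd components ========
  have hbd_xi : ∀ (q' : ℝ → ℝ → 𝒞 → ℝ),
      (∀ z x c, (z = 0 ∨ z = 1) → (x = 0 ∨ x = 1) → δ ≤ q' z x c ∧ q' z x c ≤ 1 - δ) →
      ∀ (z x : ℝ) (c : 𝒞), (z = 0 ∨ z = 1) → (x = 0 ∨ x = 1) →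
      |fdXi q' xb z x c| ≤ 1 / δ := fun q' hq' z x c hz hx =>
    hdivb zero_le_one (habs1 (hq' z xb c hz hxb).1 (hq' z xb c hz hxb).2) (hq' z x c hz hx).1
  have hbd_pi : ∀ (e' : ℝ → 𝒞 → ℝ),
      (∀ x c, (x = 0 ∨ x = 1) → δ ≤ e' x c ∧ e' x c ≤ 1 - δ) →
      ∀ (x : ℝ) (c : 𝒞), (x = 0 ∨ x = 1) → |fdPi e' xb x c| ≤ 1 / δ := fun e' he' x c hx =>
    hdivb zero_le_one (hindb x) (he' x c hx).1
  have hbd_Rh : ∀ (z : ℝ) (c : 𝒞), |fdR mh eh z c| ≤ 2 * B := by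
    intro z c
    calc |fdR mh eh z c| ≤ |mh z 0 c * eh 0 c| + |mh z 1 c * eh 1 c| := abs_add_le _ _
      _ ≤ B * 1 + B * 1 := add_le_add (habsmul hB0 (hmhB _ _ _) (hehb 0 c (Or.inl rfl)))
          (habsmul hB0 (hmhB _ _ _) (hehb 1 c (Or.inr rfl)))
      _ = 2 * B := by ring
  have hbd_Nu : ∀ (q' : ℝ → ℝ → 𝒞 → ℝ),
      (∀ z x c, (z = 0 ∨ z = 1) → (x = 0 ∨ x = 1) → δ ≤ q' z x c ∧ q' z x c ≤ 1 - δ) →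
      ∀ (x : ℝ) (c : 𝒞), (x = 0 ∨ x = 1) → |fdNu mh q' eh x c| ≤ 4 * B := by
    intro q' hq' x c hx
    have h1 : |q' 0 x c| ≤ 1 := habs1 (hq' 0 x c (Or.inl rfl) hx).1 (hq' 0 x c (Or.inl rfl) hx).2
    have h2 : |q' 1 x c| ≤ 1 := habs1 (hq' 1 x c (Or.inr rfl) hx).1 (hq' 1 x c (Or.inr rfl) hx).2
    calc |fdNu mh q' eh x c| ≤ |fdR mh eh 0 c * q' 0 x c| + |fdR mh eh 1 c * q' 1 x c| :=
          abs_add_le _ _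
      _ ≤ 2 * B * 1 + 2 * B * 1 := add_le_add (habsmul (by linarith) (hbd_Rh 0 c) h1)
          (habsmul (by linarith) (hbd_Rh 1 c) h2)
      _ = 4 * B := by ring
  have hbd_Sh : ∀ (x : ℝ) (c : 𝒞), |fdS mh qh xb x c| ≤ 2 * B := by
    intro x c
    calc |fdS mh qh xb x c| ≤ |mh 0 x c * qh 0 xb c| + |mh 1 x c * qh 1 xb c| := abs_add_le _ _
      _ ≤ B * 1 + B * 1 := add_le_add (habsmul hB0 (hmhB _ _ _) (hqhb 0 xb c (Or.inl rfl) hxb))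
          (habsmul hB0 (hmhB _ _ _) (hqhb 1 xb c (Or.inr rfl) hxb))
      _ = 2 * B := by ring
  -- ======== c-level measurability of fd components ========
  have mecXi : ∀ (q' : ℝ → ℝ → 𝒞 → ℝ), Measurable (fun p : ℝ × ℝ × 𝒞 => q' p.1 p.2.1 p.2.2) →
      ∀ z x : ℝ, Measurable fun c : 𝒞 => fdXi q' xb z x c := fun q' hq' z x =>
    (me3 q' hq' z xb).div (me3 q' hq' z x)
  have mecPi : ∀ (e' : ℝ → 𝒞 → ℝ), Measurable (fun p : ℝ × 𝒞 => e' p.1 p.2) →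
      ∀ x : ℝ, Measurable fun c : 𝒞 => fdPi e' xb x c := fun e' he' x =>
    measurable_const.div (me2 e' he' x)
  have mecR : ∀ (m' : ℝ → ℝ → 𝒞 → ℝ), Measurable (fun p : ℝ × ℝ × 𝒞 => m' p.1 p.2.1 p.2.2) →
      ∀ (e' : ℝ → 𝒞 → ℝ), Measurable (fun p : ℝ × 𝒞 => e' p.1 p.2) →
      ∀ z : ℝ, Measurable fun c : 𝒞 => fdR m' e' z c := fun m' hm' e' he' z =>
    ((me3 m' hm' z 0).mul (me2 e' he' 0)).add ((me3 m' hm' z 1).mul (me2 e' he' 1))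
  have mecNu : ∀ (m' : ℝ → ℝ → 𝒞 → ℝ), Measurable (fun p : ℝ × ℝ × 𝒞 => m' p.1 p.2.1 p.2.2) →
      ∀ (q' : ℝ → ℝ → 𝒞 → ℝ), Measurable (fun p : ℝ × ℝ × 𝒞 => q' p.1 p.2.1 p.2.2) →
      ∀ (e' : ℝ → 𝒞 → ℝ), Measurable (fun p : ℝ × 𝒞 => e' p.1 p.2) →
      ∀ x : ℝ, Measurable fun c : 𝒞 => fdNu m' q' e' x c := fun m' hm' q' hq' e' he' x =>
    ((mecR m' hm' e' he' 0).mul (me3 q' hq' 0 x)).add ((mecR m' hm' e' he' 1).mul (me3 q' hq' 1 x))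
  have mecS : ∀ (m' : ℝ → ℝ → 𝒞 → ℝ), Measurable (fun p : ℝ × ℝ × 𝒞 => m' p.1 p.2.1 p.2.2) →
      ∀ (q' : ℝ → ℝ → 𝒞 → ℝ), Measurable (fun p : ℝ × ℝ × 𝒞 => q' p.1 p.2.1 p.2.2) →
      ∀ x : ℝ, Measurable fun c : 𝒞 => fdS m' q' xb x c := fun m' hm' q' hq' x =>
    ((me3 m' hm' 0 x).mul (me3 q' hq' 0 xb)).add ((me3 m' hm' 1 x).mul (me3 q' hq' 1 xb))
  -- ======== p-level measurability for RED ========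
  have me_phiP : ∀ (m' : ℝ → ℝ → 𝒞 → ℝ) (e' : ℝ → 𝒞 → ℝ) (q' : ℝ → ℝ → 𝒞 → ℝ),
      Measurable (fun p : ℝ × ℝ × 𝒞 => m' p.1 p.2.1 p.2.2) →
      Measurable (fun p : ℝ × 𝒞 => e' p.1 p.2) →
      Measurable (fun p : ℝ × ℝ × 𝒞 => q' p.1 p.2.1 p.2.2) →
      Measurable fun p : ℝ × ℝ × 𝒞 =>
        fdPhi m' e' q' xb p.1 p.2.1 p.2.2 (m p.1 p.2.1 p.2.2) := by
    intro m' e' q' hm' he' hq'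
    have h1 : Measurable fun p : ℝ × ℝ × 𝒞 => fdXi q' xb p.1 p.2.1 p.2.2 :=
      (pm3 q' hq' _ _ measurable_fst measurable_const).div
        (pm3 q' hq' _ _ measurable_fst measurable_snd.fst)
    have h2 : Measurable fun p : ℝ × ℝ × 𝒞 => fdPi e' xb p.2.1 p.2.2 :=
      ((hind xb).comp measurable_snd.fst).div (pm2 e' he' _ measurable_snd.fst)
    have h3 : Measurable fun p : ℝ × ℝ × 𝒞 => fdR m' e' p.1 p.2.2 :=
      ((pm3 m' hm' _ _ measurable_fst measurable_const).mul
        (pm2 e' he' _ measurable_const)).add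
      ((pm3 m' hm' _ _ measurable_fst measurable_const).mul (pm2 e' he' _ measurable_const))
    have h4 : Measurable fun p : ℝ × ℝ × 𝒞 => fdNu m' q' e' p.2.1 p.2.2 :=
      (((mecR m' hm' e' he' 0).comp measurable_snd.snd).mul
        (pm3 q' hq' _ _ measurable_const measurable_snd.fst)).add
      (((mecR m' hm' e' he' 1).comp measurable_snd.snd).mul
        (pm3 q' hq' _ _ measurable_const measurable_snd.fst))
    have h5 : Measurable fun p : ℝ × ℝ × 𝒞 => fdS m' q' xb p.2.1 p.2.2 :=
      ((pm3 m' hm' _ _ measurable_const measurable_snd.fst).mul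
        (pm3 q' hq' _ _ measurable_const measurable_const)).add
      ((pm3 m' hm' _ _ measurable_const measurable_snd.fst).mul
        (pm3 q' hq' _ _ measurable_const measurable_const))
    exact ((h1.mul (hm_meas.sub (pm3 m' hm' _ _ measurable_fst measurable_snd.fst))).add
      (h2.mul (h3.sub h4))).add h5
  have me_H1P : Measurable fun p : ℝ × ℝ × 𝒞 =>
      (mh p.1 p.2.1 p.2.2 - m p.1 p.2.1 p.2.2) *
        (fdXi q xb p.1 p.2.1 p.2.2 - fdXi qh xb p.1 p.2.1 p.2.2) := by
    have h1 : Measurable fun p : ℝ × ℝ × 𝒞 => fdXi q xb p.1 p.2.1 p.2.2 :=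
      (pm3 q hq_meas _ _ measurable_fst measurable_const).div
        (pm3 q hq_meas _ _ measurable_fst measurable_snd.fst)
    have h2 : Measurable fun p : ℝ × ℝ × 𝒞 => fdXi qh xb p.1 p.2.1 p.2.2 :=
      (pm3 qh hqh_meas _ _ measurable_fst measurable_const).div
        (pm3 qh hqh_meas _ _ measurable_fst measurable_snd.fst)
    exact (hmh_meas.sub hm_meas).mul (h1.sub h2)
  have me_H2P : Measurable fun p : ℝ × ℝ × 𝒞 =>
      (fdPi eh xb p.2.1 p.2.2 - fdPi e xb p.2.1 p.2.2) *
        (fdNu mh q eh p.2.1 p.2.2 - fdNu mh qh eh p.2.1 p.2.2) := by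
    have h1 : Measurable fun p : ℝ × ℝ × 𝒞 => fdPi eh xb p.2.1 p.2.2 :=
      ((hind xb).comp measurable_snd.fst).div (pm2 eh heh_meas _ measurable_snd.fst)
    have h2 : Measurable fun p : ℝ × ℝ × 𝒞 => fdPi e xb p.2.1 p.2.2 :=
      ((hind xb).comp measurable_snd.fst).div (pm2 e he_meas _ measurable_snd.fst)
    have h3 : Measurable fun p : ℝ × ℝ × 𝒞 => fdNu mh q eh p.2.1 p.2.2 :=
      (((mecR mh hmh_meas eh heh_meas 0).comp measurable_snd.snd).mul
        (pm3 q hq_meas _ _ measurable_const measurable_snd.fst)).add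
      (((mecR mh hmh_meas eh heh_meas 1).comp measurable_snd.snd).mul
        (pm3 q hq_meas _ _ measurable_const measurable_snd.fst))
    have h4 : Measurable fun p : ℝ × ℝ × 𝒞 => fdNu mh qh eh p.2.1 p.2.2 :=
      (((mecR mh hmh_meas eh heh_meas 0).comp measurable_snd.snd).mul
        (pm3 qh hqh_meas _ _ measurable_const measurable_snd.fst)).add
      (((mecR mh hmh_meas eh heh_meas 1).comp measurable_snd.snd).mul
        (pm3 qh hqh_meas _ _ measurable_const measurable_snd.fst))
    exact (h1.sub h2).mul (h3.sub h4)
  -- ======== slice integrability ========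
  have hsliceHh : ∀ z x : ℝ, (z = 0 ∨ z = 1) → (x = 0 ∨ x = 1) →
      Integrable (fun ω => fdPhi mh eh qh xb z x (C ω) (m z x (C ω))) P := by
    intro z x hz hx
    have e1 : (fun ω => fdPhi mh eh qh xb z x (C ω) (m z x (C ω)))
        = fun ω => (m z x (C ω) - mh z x (C ω)) * fdXi qh xb z x (C ω)
          + (fdPi eh xb x (C ω) * (fdR mh eh z (C ω) - fdNu mh qh eh x (C ω))
            + fdS mh qh xb x (C ω)) := by
      funext ω; simp only [fdPhi]; ring
    rw [e1]
    refine Integrable.add ?_ (hbddInt (1 / δ * (2 * B + 4 * B) + 2 * B) ?_ ?_)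
    · refine hIB (1 / δ) ((Mslice z x hz hx).sub (hbddInt B
        ((me3 mh hmh_meas z x).comp hC).aestronglyMeasurable fun ω => hmhB _ _ _))
        ((mecXi qh hqh_meas z x).comp hC).aestronglyMeasurable
        fun ω => hbd_xi qh hqh_pos z x _ hz hx
    · exact (((mecPi eh heh_meas x).comp hC).mul
        (((mecR mh hmh_meas eh heh_meas z).comp hC).sub
          ((mecNu mh hmh_meas qh hqh_meas eh heh_meas x).comp hC))).add
        ((mecS mh hmh_meas qh hqh_meas x).comp hC) |>.aestronglyMeasurable
    · intro ω
      calc |fdPi eh xb x (C ω) * (fdR mh eh z (C ω) - fdNu mh qh eh x (C ω))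
            + fdS mh qh xb x (C ω)|
          ≤ |fdPi eh xb x (C ω) * (fdR mh eh z (C ω) - fdNu mh qh eh x (C ω))|
            + |fdS mh qh xb x (C ω)| := abs_add_le _ _
        _ ≤ 1 / δ * (2 * B + 4 * B) + 2 * B := add_le_add
            (habsmul (by positivity) (hbd_pi eh heh_pos x _ hx)
              ((tri2 _ _).trans (add_le_add (hbd_Rh z _) (hbd_Nu qh hqh_pos x _ hx))))
            (hbd_Sh x _)
  have hsliceHt : ∀ z x : ℝ, (z = 0 ∨ z = 1) → (x = 0 ∨ x = 1) →
      Integrable (fun ω => fdPhi m e q xb z x (C ω) (m z x (C ω))) P := by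
    intro z x hz hx
    have e1 : (fun ω => fdPhi m e q xb z x (C ω) (m z x (C ω)))
        = fun ω => (m z x (C ω) - m z x (C ω)) * fdXi q xb z x (C ω)
          + (fdPi e xb x (C ω) * (fdR m e z (C ω) - fdNu m q e x (C ω))
            + fdS m q xb x (C ω)) := by
      funext ω; simp only [fdPhi]; ring
    rw [e1]
    have hRz : ∀ z' : ℝ, (z' = 0 ∨ z' = 1) → Integrable (fun ω => fdR m e z' (C ω)) P := by
      intro z' hz'
      exact (hIB 1 (Mslice z' 0 hz' (Or.inl rfl))
          ((me2 e he_meas 0).comp hC).aestronglyMeasurable fun ω => heb 0 _ (Or.inl rfl)).add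
        (hIB 1 (Mslice z' 1 hz' (Or.inr rfl))
          ((me2 e he_meas 1).comp hC).aestronglyMeasurable fun ω => heb 1 _ (Or.inr rfl))
    have hNux : Integrable (fun ω => fdNu m q e x (C ω)) P :=
      (hIB 1 (hRz 0 (Or.inl rfl)) ((me3 q hq_meas 0 x).comp hC).aestronglyMeasurable
        fun ω => hqb 0 x _ (Or.inl rfl) hx).add
      (hIB 1 (hRz 1 (Or.inr rfl)) ((me3 q hq_meas 1 x).comp hC).aestronglyMeasurable
        fun ω => hqb 1 x _ (Or.inr rfl) hx)
    have hSx : Integrable (fun ω => fdS m q xb x (C ω)) P :=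
      (hIB 1 (Mslice 0 x (Or.inl rfl) hx) ((me3 q hq_meas 0 xb).comp hC).aestronglyMeasurable
        fun ω => hqb 0 xb _ (Or.inl rfl) hxb).add
      (hIB 1 (Mslice 1 x (Or.inr rfl) hx) ((me3 q hq_meas 1 xb).comp hC).aestronglyMeasurable
        fun ω => hqb 1 xb _ (Or.inr rfl) hxb)
    refine Integrable.add ?_ (Integrable.add ?_ hSx)
    · exact hIB (1 / δ) ((Mslice z x hz hx).sub (Mslice z x hz hx))
        ((mecXi q hq_meas z x).comp hC).aestronglyMeasurable
        fun ω => hbd_xi q hq_pos z x _ hz hx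
    · exact hBI (1 / δ) ((hRz z hz).sub hNux)
        ((mecPi e he_meas x).comp hC).aestronglyMeasurable
        fun ω => hbd_pi e he_pos x _ hx
  have hsliceH1 : ∀ z x : ℝ, (z = 0 ∨ z = 1) → (x = 0 ∨ x = 1) →
      Integrable (fun ω => (mh z x (C ω) - m z x (C ω)) *
        (fdXi q xb z x (C ω) - fdXi qh xb z x (C ω))) P := by
    intro z x hz hx
    refine hIB (1 / δ + 1 / δ) ((hbddInt B
        ((me3 mh hmh_meas z x).comp hC).aestronglyMeasurable fun ω => hmhB _ _ _).sub
        (Mslice z x hz hx))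
      (((mecXi q hq_meas z x).sub (mecXi qh hqh_meas z x)).comp hC).aestronglyMeasurable
      fun ω => (tri2 _ _).trans
        (add_le_add (hbd_xi q hq_pos z x _ hz hx) (hbd_xi qh hqh_pos z x _ hz hx))
  have hsliceH2 : ∀ z x : ℝ, (z = 0 ∨ z = 1) → (x = 0 ∨ x = 1) →
      Integrable (fun ω => (fdPi eh xb x (C ω) - fdPi e xb x (C ω)) *
        (fdNu mh q eh x (C ω) - fdNu mh qh eh x (C ω))) P := by
    intro z x hz hx
    refine hbddInt ((1 / δ + 1 / δ) * (4 * B + 4 * B)) ((((mecPi eh heh_meas x).sub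
        (mecPi e he_meas x)).mul ((mecNu mh hmh_meas q hq_meas eh heh_meas x).sub
        (mecNu mh hmh_meas qh hqh_meas eh heh_meas x))).comp hC).aestronglyMeasurable
      fun ω => habsmul (by positivity)
        ((tri2 _ _).trans (add_le_add (hbd_pi eh heh_pos x _ hx) (hbd_pi e he_pos x _ hx)))
        ((tri2 _ _).trans (add_le_add (hbd_Nu q hq_pos x _ hx) (hbd_Nu qh hqh_pos x _ hx)))
  -- ======== step A: replace Y by m via conditioning on (Z,X,C) ========
  have stepA : ∀ (m' : ℝ → ℝ → 𝒞 → ℝ) (e' : ℝ → 𝒞 → ℝ) (q' : ℝ → ℝ → 𝒞 → ℝ),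
      Measurable (fun p : ℝ × ℝ × 𝒞 => q' p.1 p.2.1 p.2.2) →
      (∀ z x c, (z = 0 ∨ z = 1) → (x = 0 ∨ x = 1) → δ ≤ q' z x c ∧ q' z x c ≤ 1 - δ) →
      Integrable (fun ω => fdPhi m' e' q' xb (Z ω) (X ω) (C ω) (m (Z ω) (X ω) (C ω))) P →
      ∫ ω, fdPhi m' e' q' xb (Z ω) (X ω) (C ω) (Y ω) ∂P
        = ∫ ω, fdPhi m' e' q' xb (Z ω) (X ω) (C ω) (m (Z ω) (X ω) (C ω)) ∂P := by
    intro m' e' q' hq'm hq'b hint2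
    have hxi_meas : Measurable fun ω => fdXi q' xb (Z ω) (X ω) (C ω) :=
      (meO q' hq'm Z (fun _ => xb) hZ measurable_const).div (meO q' hq'm Z X hZ hX)
    have hxi_bd : ∀ ω, |fdXi q' xb (Z ω) (X ω) (C ω)| ≤ 1 / δ := fun ω =>
      hbd_xi q' hq'b _ _ _ (hZ01 ω) (hX01 ω)
    have hxiY_int : Integrable (fun ω => fdXi q' xb (Z ω) (X ω) (C ω) * Y ω) P :=
      hBI (1 / δ) hYint hxi_meas.aestronglyMeasurable hxi_bd
    have hxim_int : Integrable
        (fun ω => fdXi q' xb (Z ω) (X ω) (C ω) * m (Z ω) (X ω) (C ω)) P :=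
      hBI (1 / δ) hmint hxi_meas.aestronglyMeasurable hxi_bd
    have hxi_sm : StronglyMeasurable[MeasurableSpace.comap
        (fun ω => (Z ω, X ω, C ω)) inferInstance] fun ω => fdXi q' xb (Z ω) (X ω) (C ω) := by
      have hF : Measurable fun p : ℝ × ℝ × 𝒞 => fdXi q' xb p.1 p.2.1 p.2.2 :=
        (pm3 q' hq'm _ _ measurable_fst measurable_const).div
          (pm3 q' hq'm _ _ measurable_fst measurable_snd.fst)
      exact (hF.comp hprojZXC).stronglyMeasurable
    have key : ∫ ω, fdXi q' xb (Z ω) (X ω) (C ω) * Y ω ∂P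
        = ∫ ω, fdXi q' xb (Z ω) (X ω) (C ω) * m (Z ω) (X ω) (C ω) ∂P :=
      fd_pull_out hZXC.comap_le hxi_sm hxiY_int hYint hm
    have e1 : (fun ω => fdPhi m' e' q' xb (Z ω) (X ω) (C ω) (Y ω))
        = fun ω => fdXi q' xb (Z ω) (X ω) (C ω) * Y ω
            + (fdPhi m' e' q' xb (Z ω) (X ω) (C ω) (m (Z ω) (X ω) (C ω))
              - fdXi q' xb (Z ω) (X ω) (C ω) * m (Z ω) (X ω) (C ω)) := by
      funext ω; simp only [fdPhi]; ring
    have hrest : Integrable (fun ω => fdPhi m' e' q' xb (Z ω) (X ω) (C ω)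
        (m (Z ω) (X ω) (C ω)) - fdXi q' xb (Z ω) (X ω) (C ω) * m (Z ω) (X ω) (C ω)) P :=
      hint2.sub hxim_int
    rw [e1, integral_add hxiY_int hrest, key, ← integral_add hxim_int hrest]
    refine integral_congr_ae (Filter.Eventually.of_forall fun ω => ?_)
    ring
  -- ======== (ℝ × 𝒞)-level measurability helpers ========
  have em3 : ∀ (F : ℝ → ℝ → 𝒞 → ℝ), Measurable (fun p : ℝ × ℝ × 𝒞 => F p.1 p.2.1 p.2.2) →
      ∀ z : ℝ, Measurable fun p : ℝ × 𝒞 => F z p.1 p.2 := fun F hF z =>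
    hF.comp (measurable_const.prodMk (measurable_fst.prodMk measurable_snd))
  have em3b : ∀ (F : ℝ → ℝ → 𝒞 → ℝ), Measurable (fun p : ℝ × ℝ × 𝒞 => F p.1 p.2.1 p.2.2) →
      ∀ x : ℝ, Measurable fun p : ℝ × 𝒞 => F p.1 x p.2 := fun F hF x =>
    hF.comp (measurable_fst.prodMk (measurable_const.prodMk measurable_snd))
  have me2R : ∀ (m' : ℝ → ℝ → 𝒞 → ℝ), Measurable (fun p : ℝ × ℝ × 𝒞 => m' p.1 p.2.1 p.2.2) →
      ∀ (e' : ℝ → 𝒞 → ℝ), Measurable (fun p : ℝ × 𝒞 => e' p.1 p.2) →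
      Measurable fun p : ℝ × 𝒞 => fdR m' e' p.1 p.2 := fun m' hm' e' he' =>
    ((em3b m' hm' 0).mul ((me2 e' he' 0).comp measurable_snd)).add
      ((em3b m' hm' 1).mul ((me2 e' he' 1).comp measurable_snd))
  have me2Nu : ∀ (m' : ℝ → ℝ → 𝒞 → ℝ), Measurable (fun p : ℝ × ℝ × 𝒞 => m' p.1 p.2.1 p.2.2) →
      ∀ (q' : ℝ → ℝ → 𝒞 → ℝ), Measurable (fun p : ℝ × ℝ × 𝒞 => q' p.1 p.2.1 p.2.2) →
      ∀ (e' : ℝ → 𝒞 → ℝ), Measurable (fun p : ℝ × 𝒞 => e' p.1 p.2) →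
      Measurable fun p : ℝ × 𝒞 => fdNu m' q' e' p.1 p.2 := fun m' hm' q' hq' e' he' =>
    (((mecR m' hm' e' he' 0).comp measurable_snd).mul (em3 q' hq' 0)).add
      (((mecR m' hm' e' he' 1).comp measurable_snd).mul (em3 q' hq' 1))
  have me2S : ∀ (m' : ℝ → ℝ → 𝒞 → ℝ), Measurable (fun p : ℝ × ℝ × 𝒞 => m' p.1 p.2.1 p.2.2) →
      ∀ (q' : ℝ → ℝ → 𝒞 → ℝ), Measurable (fun p : ℝ × ℝ × 𝒞 => q' p.1 p.2.1 p.2.2) →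
      Measurable fun p : ℝ × 𝒞 => fdS m' q' xb p.1 p.2 := fun m' hm' q' hq' =>
    ((em3 m' hm' 0).mul ((me3 q' hq' 0 xb).comp measurable_snd)).add
      ((em3 m' hm' 1).mul ((me3 q' hq' 1 xb).comp measurable_snd))
  have me2Pi : ∀ (e' : ℝ → 𝒞 → ℝ), Measurable (fun p : ℝ × 𝒞 => e' p.1 p.2) →
      Measurable fun p : ℝ × 𝒞 => fdPi e' xb p.1 p.2 := fun e' he' =>
    ((hind xb).comp measurable_fst).div he'
  -- composite integrability (hatted)
  have hinth : Integrable
      (fun ω => fdPhi mh eh qh xb (Z ω) (X ω) (C ω) (m (Z ω) (X ω) (C ω))) P := by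
    have e1 : (fun ω => fdPhi mh eh qh xb (Z ω) (X ω) (C ω) (m (Z ω) (X ω) (C ω)))
        = fun ω => (m (Z ω) (X ω) (C ω) - mh (Z ω) (X ω) (C ω))
              * fdXi qh xb (Z ω) (X ω) (C ω)
          + (fdPi eh xb (X ω) (C ω) * (fdR mh eh (Z ω) (C ω) - fdNu mh qh eh (X ω) (C ω))
            + fdS mh qh xb (X ω) (C ω)) := by
      funext ω; simp only [fdPhi]; ring
    rw [e1]
    refine Integrable.add ?_ (hbddInt (1 / δ * (2 * B + 4 * B) + 2 * B) ?_ ?_)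
    · exact hIB (1 / δ) (hmint.sub (hbddInt B (meO mh hmh_meas Z X hZ hX).aestronglyMeasurable
        fun ω => hmhB _ _ _))
        ((meO qh hqh_meas Z (fun _ => xb) hZ measurable_const).div
          (meO qh hqh_meas Z X hZ hX)).aestronglyMeasurable
        fun ω => hbd_xi qh hqh_pos _ _ _ (hZ01 ω) (hX01 ω)
    · exact (((meO2 (fun x c => fdPi eh xb x c) (me2Pi eh heh_meas) X hX)).mul
        ((meO2 (fun z c => fdR mh eh z c) (me2R mh hmh_meas eh heh_meas) Z hZ).sub
          (meO2 (fun x c => fdNu mh qh eh x c)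
            (me2Nu mh hmh_meas qh hqh_meas eh heh_meas) X hX))).add
        (meO2 (fun x c => fdS mh qh xb x c) (me2S mh hmh_meas qh hqh_meas) X hX)
        |>.aestronglyMeasurable
    · intro ω
      calc |fdPi eh xb (X ω) (C ω) * (fdR mh eh (Z ω) (C ω) - fdNu mh qh eh (X ω) (C ω))
            + fdS mh qh xb (X ω) (C ω)|
          ≤ |fdPi eh xb (X ω) (C ω) * (fdR mh eh (Z ω) (C ω) - fdNu mh qh eh (X ω) (C ω))|
            + |fdS mh qh xb (X ω) (C ω)| := abs_add_le _ _
        _ ≤ 1 / δ * (2 * B + 4 * B) + 2 * B := add_le_add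
            (habsmul (by positivity) (hbd_pi eh heh_pos _ _ (hX01 ω))
              ((tri2 _ _).trans (add_le_add (hbd_Rh _ _) (hbd_Nu qh hqh_pos _ _ (hX01 ω)))))
            (hbd_Sh _ _)
  -- composite integrability (true)
  have hintt : Integrable
      (fun ω => fdPhi m e q xb (Z ω) (X ω) (C ω) (m (Z ω) (X ω) (C ω))) P := by
    have e1 : (fun ω => fdPhi m e q xb (Z ω) (X ω) (C ω) (m (Z ω) (X ω) (C ω)))
        = fun ω => (m (Z ω) (X ω) (C ω) - m (Z ω) (X ω) (C ω)) * fdXi q xb (Z ω) (X ω) (C ω)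
          + (fdPi e xb (X ω) (C ω) * (fdR m e (Z ω) (C ω) - fdNu m q e (X ω) (C ω))
            + fdS m q xb (X ω) (C ω)) := by
      funext ω; simp only [fdPhi]; ring
    rw [e1]
    have hRZ : Integrable (fun ω => fdR m e (Z ω) (C ω)) P := by
      have e2 : (fun ω => fdR m e (Z ω) (C ω))
          = fun ω => m (Z ω) 0 (C ω) * e 0 (C ω) + m (Z ω) 1 (C ω) * e 1 (C ω) := rfl
      rw [e2]
      exact (hIB 1 (hint_mZx 0 (Or.inl rfl))
          (meO2 e he_meas (fun _ => 0) measurable_const).aestronglyMeasurable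
          fun ω => heb 0 _ (Or.inl rfl)).add
        (hIB 1 (hint_mZx 1 (Or.inr rfl))
          (meO2 e he_meas (fun _ => 1) measurable_const).aestronglyMeasurable
          fun ω => heb 1 _ (Or.inr rfl))
    have hRc : ∀ z' : ℝ, (z' = 0 ∨ z' = 1) → Integrable (fun ω => fdR m e z' (C ω)) P := by
      intro z' hz'
      exact (hIB 1 (Mslice z' 0 hz' (Or.inl rfl))
          ((me2 e he_meas 0).comp hC).aestronglyMeasurable fun ω => heb 0 _ (Or.inl rfl)).add
        (hIB 1 (Mslice z' 1 hz' (Or.inr rfl))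
          ((me2 e he_meas 1).comp hC).aestronglyMeasurable fun ω => heb 1 _ (Or.inr rfl))
    have hNuX : Integrable (fun ω => fdNu m q e (X ω) (C ω)) P := by
      have e2 : (fun ω => fdNu m q e (X ω) (C ω))
          = fun ω => fdR m e 0 (C ω) * q 0 (X ω) (C ω) + fdR m e 1 (C ω) * q 1 (X ω) (C ω) := rfl
      rw [e2]
      exact (hIB 1 (hRc 0 (Or.inl rfl))
          (meO q hq_meas (fun _ => 0) X measurable_const hX).aestronglyMeasurable
          fun ω => hqb 0 _ _ (Or.inl rfl) (hX01 ω)).add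
        (hIB 1 (hRc 1 (Or.inr rfl))
          (meO q hq_meas (fun _ => 1) X measurable_const hX).aestronglyMeasurable
          fun ω => hqb 1 _ _ (Or.inr rfl) (hX01 ω))
    have hSX : Integrable (fun ω => fdS m q xb (X ω) (C ω)) P := by
      have e2 : (fun ω => fdS m q xb (X ω) (C ω))
          = fun ω => m 0 (X ω) (C ω) * q 0 xb (C ω) + m 1 (X ω) (C ω) * q 1 xb (C ω) := rfl
      rw [e2]
      exact (hIB 1 (hint_mzX 0 (Or.inl rfl))
          ((me3 q hq_meas 0 xb).comp hC).aestronglyMeasurable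
          fun ω => hqb 0 xb _ (Or.inl rfl) hxb).add
        (hIB 1 (hint_mzX 1 (Or.inr rfl))
          ((me3 q hq_meas 1 xb).comp hC).aestronglyMeasurable
          fun ω => hqb 1 xb _ (Or.inr rfl) hxb)
    refine Integrable.add ?_ (Integrable.add ?_ hSX)
    · exact hIB (1 / δ) (hmint.sub hmint)
        ((meO q hq_meas Z (fun _ => xb) hZ measurable_const).div
          (meO q hq_meas Z X hZ hX)).aestronglyMeasurable
        fun ω => hbd_xi q hq_pos _ _ _ (hZ01 ω) (hX01 ω)
    · exact hBI (1 / δ) (hRZ.sub hNuX)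
        (meO2 (fun x c => fdPi e xb x c) (me2Pi e he_meas) X hX).aestronglyMeasurable
        fun ω => hbd_pi e he_pos _ _ (hX01 ω)
  -- ======== reductions via RED ========
  have redHh : ∫ ω, fdPhi mh eh qh xb (Z ω) (X ω) (C ω) (m (Z ω) (X ω) (C ω)) ∂P
      = ∫ ω, (fdPhi mh eh qh xb 0 0 (C ω) (m 0 0 (C ω)) * q 0 0 (C ω) * e 0 (C ω)
        + fdPhi mh eh qh xb 0 1 (C ω) (m 0 1 (C ω)) * q 0 1 (C ω) * e 1 (C ω)
        + fdPhi mh eh qh xb 1 0 (C ω) (m 1 0 (C ω)) * q 1 0 (C ω) * e 0 (C ω)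
        + fdPhi mh eh qh xb 1 1 (C ω) (m 1 1 (C ω)) * q 1 1 (C ω) * e 1 (C ω)) ∂P :=
    RED (fun z x c => fdPhi mh eh qh xb z x c (m z x c))
      (me_phiP mh eh qh hmh_meas heh_meas hqh_meas) hsliceHh
  have redHt : ∫ ω, fdPhi m e q xb (Z ω) (X ω) (C ω) (m (Z ω) (X ω) (C ω)) ∂P
      = ∫ ω, (fdPhi m e q xb 0 0 (C ω) (m 0 0 (C ω)) * q 0 0 (C ω) * e 0 (C ω)
        + fdPhi m e q xb 0 1 (C ω) (m 0 1 (C ω)) * q 0 1 (C ω) * e 1 (C ω)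
        + fdPhi m e q xb 1 0 (C ω) (m 1 0 (C ω)) * q 1 0 (C ω) * e 0 (C ω)
        + fdPhi m e q xb 1 1 (C ω) (m 1 1 (C ω)) * q 1 1 (C ω) * e 1 (C ω)) ∂P :=
    RED (fun z x c => fdPhi m e q xb z x c (m z x c))
      (me_phiP m e q hm_meas he_meas hq_meas) hsliceHt
  have redH1 : ∫ ω, (mh (Z ω) (X ω) (C ω) - m (Z ω) (X ω) (C ω)) *
        (fdXi q xb (Z ω) (X ω) (C ω) - fdXi qh xb (Z ω) (X ω) (C ω)) ∂P
      = ∫ ω, ((mh 0 0 (C ω) - m 0 0 (C ω)) * (fdXi q xb 0 0 (C ω) - fdXi qh xb 0 0 (C ω))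
          * q 0 0 (C ω) * e 0 (C ω)
        + (mh 0 1 (C ω) - m 0 1 (C ω)) * (fdXi q xb 0 1 (C ω) - fdXi qh xb 0 1 (C ω))
          * q 0 1 (C ω) * e 1 (C ω)
        + (mh 1 0 (C ω) - m 1 0 (C ω)) * (fdXi q xb 1 0 (C ω) - fdXi qh xb 1 0 (C ω))
          * q 1 0 (C ω) * e 0 (C ω)
        + (mh 1 1 (C ω) - m 1 1 (C ω)) * (fdXi q xb 1 1 (C ω) - fdXi qh xb 1 1 (C ω))
          * q 1 1 (C ω) * e 1 (C ω)) ∂P :=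
    RED (fun z x c => (mh z x c - m z x c) * (fdXi q xb z x c - fdXi qh xb z x c))
      me_H1P hsliceH1
  have redH2 : ∫ ω, (fdPi eh xb (X ω) (C ω) - fdPi e xb (X ω) (C ω)) *
        (fdNu mh q eh (X ω) (C ω) - fdNu mh qh eh (X ω) (C ω)) ∂P
      = ∫ ω, ((fdPi eh xb 0 (C ω) - fdPi e xb 0 (C ω))
          * (fdNu mh q eh 0 (C ω) - fdNu mh qh eh 0 (C ω)) * q 0 0 (C ω) * e 0 (C ω)
        + (fdPi eh xb 1 (C ω) - fdPi e xb 1 (C ω))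
          * (fdNu mh q eh 1 (C ω) - fdNu mh qh eh 1 (C ω)) * q 0 1 (C ω) * e 1 (C ω)
        + (fdPi eh xb 0 (C ω) - fdPi e xb 0 (C ω))
          * (fdNu mh q eh 0 (C ω) - fdNu mh qh eh 0 (C ω)) * q 1 0 (C ω) * e 0 (C ω)
        + (fdPi eh xb 1 (C ω) - fdPi e xb 1 (C ω))
          * (fdNu mh q eh 1 (C ω) - fdNu mh qh eh 1 (C ω)) * q 1 1 (C ω) * e 1 (C ω)) ∂P :=
    RED (fun z x c => (fdPi eh xb x c - fdPi e xb x c)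
        * (fdNu mh q eh x c - fdNu mh qh eh x c)) me_H2P (fun z x hz hx => hsliceH2 z x hz hx)
  -- ======== integrability of the reduced (c-level) integrands ========
  have hrow : ∀ (G : 𝒞 → ℝ), Integrable (fun ω => G (C ω)) P → ∀ (z x : ℝ),
      (z = 0 ∨ z = 1) → (x = 0 ∨ x = 1) →
      Integrable (fun ω => G (C ω) * q z x (C ω) * e x (C ω)) P := fun G hGi z x hz hx =>
    hIB 1 (hIB 1 hGi ((me3 q hq_meas z x).comp hC).aestronglyMeasurable
        fun ω => hqb z x _ hz hx)
      ((me2 e he_meas x).comp hC).aestronglyMeasurable fun ω => heb x _ hx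
  have hSHh : Integrable (fun ω =>
      fdPhi mh eh qh xb 0 0 (C ω) (m 0 0 (C ω)) * q 0 0 (C ω) * e 0 (C ω)
      + fdPhi mh eh qh xb 0 1 (C ω) (m 0 1 (C ω)) * q 0 1 (C ω) * e 1 (C ω)
      + fdPhi mh eh qh xb 1 0 (C ω) (m 1 0 (C ω)) * q 1 0 (C ω) * e 0 (C ω)
      + fdPhi mh eh qh xb 1 1 (C ω) (m 1 1 (C ω)) * q 1 1 (C ω) * e 1 (C ω)) P :=
    (((hrow (fun c => fdPhi mh eh qh xb 0 0 c (m 0 0 c)) (hsliceHh 0 0 (Or.inl rfl) (Or.inl rfl)) 0 0 (Or.inl rfl) (Or.inl rfl)).add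
      (hrow (fun c => fdPhi mh eh qh xb 0 1 c (m 0 1 c)) (hsliceHh 0 1 (Or.inl rfl) (Or.inr rfl)) 0 1 (Or.inl rfl) (Or.inr rfl))).add
      (hrow (fun c => fdPhi mh eh qh xb 1 0 c (m 1 0 c)) (hsliceHh 1 0 (Or.inr rfl) (Or.inl rfl)) 1 0 (Or.inr rfl) (Or.inl rfl))).add
      (hrow (fun c => fdPhi mh eh qh xb 1 1 c (m 1 1 c)) (hsliceHh 1 1 (Or.inr rfl) (Or.inr rfl)) 1 1 (Or.inr rfl) (Or.inr rfl))
  have hSHt : Integrable (fun ω =>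
      fdPhi m e q xb 0 0 (C ω) (m 0 0 (C ω)) * q 0 0 (C ω) * e 0 (C ω)
      + fdPhi m e q xb 0 1 (C ω) (m 0 1 (C ω)) * q 0 1 (C ω) * e 1 (C ω)
      + fdPhi m e q xb 1 0 (C ω) (m 1 0 (C ω)) * q 1 0 (C ω) * e 0 (C ω)
      + fdPhi m e q xb 1 1 (C ω) (m 1 1 (C ω)) * q 1 1 (C ω) * e 1 (C ω)) P :=
    (((hrow (fun c => fdPhi m e q xb 0 0 c (m 0 0 c)) (hsliceHt 0 0 (Or.inl rfl) (Or.inl rfl)) 0 0 (Or.inl rfl) (Or.inl rfl)).add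
      (hrow (fun c => fdPhi m e q xb 0 1 c (m 0 1 c)) (hsliceHt 0 1 (Or.inl rfl) (Or.inr rfl)) 0 1 (Or.inl rfl) (Or.inr rfl))).add
      (hrow (fun c => fdPhi m e q xb 1 0 c (m 1 0 c)) (hsliceHt 1 0 (Or.inr rfl) (Or.inl rfl)) 1 0 (Or.inr rfl) (Or.inl rfl))).add
      (hrow (fun c => fdPhi m e q xb 1 1 c (m 1 1 c)) (hsliceHt 1 1 (Or.inr rfl) (Or.inr rfl)) 1 1 (Or.inr rfl) (Or.inr rfl))
  have hSH1 : Integrable (fun ω =>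
      (mh 0 0 (C ω) - m 0 0 (C ω)) * (fdXi q xb 0 0 (C ω) - fdXi qh xb 0 0 (C ω))
        * q 0 0 (C ω) * e 0 (C ω)
      + (mh 0 1 (C ω) - m 0 1 (C ω)) * (fdXi q xb 0 1 (C ω) - fdXi qh xb 0 1 (C ω))
        * q 0 1 (C ω) * e 1 (C ω)
      + (mh 1 0 (C ω) - m 1 0 (C ω)) * (fdXi q xb 1 0 (C ω) - fdXi qh xb 1 0 (C ω))
        * q 1 0 (C ω) * e 0 (C ω)
      + (mh 1 1 (C ω) - m 1 1 (C ω)) * (fdXi q xb 1 1 (C ω) - fdXi qh xb 1 1 (C ω))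
        * q 1 1 (C ω) * e 1 (C ω)) P :=
    (((hrow (fun c => (mh 0 0 c - m 0 0 c) * (fdXi q xb 0 0 c - fdXi qh xb 0 0 c)) (hsliceH1 0 0 (Or.inl rfl) (Or.inl rfl)) 0 0 (Or.inl rfl) (Or.inl rfl)).add
      (hrow (fun c => (mh 0 1 c - m 0 1 c) * (fdXi q xb 0 1 c - fdXi qh xb 0 1 c)) (hsliceH1 0 1 (Or.inl rfl) (Or.inr rfl)) 0 1 (Or.inl rfl) (Or.inr rfl))).add
      (hrow (fun c => (mh 1 0 c - m 1 0 c) * (fdXi q xb 1 0 c - fdXi qh xb 1 0 c)) (hsliceH1 1 0 (Or.inr rfl) (Or.inl rfl)) 1 0 (Or.inr rfl) (Or.inl rfl))).add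
      (hrow (fun c => (mh 1 1 c - m 1 1 c) * (fdXi q xb 1 1 c - fdXi qh xb 1 1 c)) (hsliceH1 1 1 (Or.inr rfl) (Or.inr rfl)) 1 1 (Or.inr rfl) (Or.inr rfl))
  have hSH2 : Integrable (fun ω =>
      (fdPi eh xb 0 (C ω) - fdPi e xb 0 (C ω))
        * (fdNu mh q eh 0 (C ω) - fdNu mh qh eh 0 (C ω)) * q 0 0 (C ω) * e 0 (C ω)
      + (fdPi eh xb 1 (C ω) - fdPi e xb 1 (C ω))
        * (fdNu mh q eh 1 (C ω) - fdNu mh qh eh 1 (C ω)) * q 0 1 (C ω) * e 1 (C ω)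
      + (fdPi eh xb 0 (C ω) - fdPi e xb 0 (C ω))
        * (fdNu mh q eh 0 (C ω) - fdNu mh qh eh 0 (C ω)) * q 1 0 (C ω) * e 0 (C ω)
      + (fdPi eh xb 1 (C ω) - fdPi e xb 1 (C ω))
        * (fdNu mh q eh 1 (C ω) - fdNu mh qh eh 1 (C ω)) * q 1 1 (C ω) * e 1 (C ω)) P :=
    (((hrow (fun c => (fdPi eh xb 0 c - fdPi e xb 0 c) * (fdNu mh q eh 0 c - fdNu mh qh eh 0 c)) (hsliceH2 0 0 (Or.inl rfl) (Or.inl rfl)) 0 0 (Or.inl rfl) (Or.inl rfl)).add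
      (hrow (fun c => (fdPi eh xb 1 c - fdPi e xb 1 c) * (fdNu mh q eh 1 c - fdNu mh qh eh 1 c)) (hsliceH2 0 1 (Or.inl rfl) (Or.inr rfl)) 0 1 (Or.inl rfl) (Or.inr rfl))).add
      (hrow (fun c => (fdPi eh xb 0 c - fdPi e xb 0 c) * (fdNu mh q eh 0 c - fdNu mh qh eh 0 c)) (hsliceH2 1 0 (Or.inr rfl) (Or.inl rfl)) 1 0 (Or.inr rfl) (Or.inl rfl))).add
      (hrow (fun c => (fdPi eh xb 1 c - fdPi e xb 1 c) * (fdNu mh q eh 1 c - fdNu mh qh eh 1 c)) (hsliceH2 1 1 (Or.inr rfl) (Or.inr rfl)) 1 1 (Or.inr rfl) (Or.inr rfl))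
  -- t3 integrability
  have ht3 : ∀ z x : ℝ, (z = 0 ∨ z = 1) → (x = 0 ∨ x = 1) →
      Integrable (fun ω => mh z x (C ω) * (q z xb (C ω) - qh z xb (C ω))
        * (eh x (C ω) - e x (C ω))) P := by
    intro z x hz hx
    refine hbddInt (B * (1 + 1) * (1 + 1)) (((((me3 mh hmh_meas z x).mul
        ((me3 q hq_meas z xb).sub (me3 qh hqh_meas z xb))).mul
        ((me2 eh heh_meas x).sub (me2 e he_meas x))).comp hC)).aestronglyMeasurable
      fun ω => ?_
    exact habsmul (by positivity)
      (habsmul hB0 (hmhB _ _ _) ((tri2 _ _).trans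
        (add_le_add (hqb z xb _ hz hxb) (hqhb z xb _ hz hxb))))
      ((tri2 _ _).trans (add_le_add (hehb x _ hx) (heb x _ hx)))
  -- ======== final assembly ========
  have h3a : Integrable (fun ω => mh 0 0 (C ω) * (q 0 xb (C ω) - qh 0 xb (C ω)) * (eh 0 (C ω) - e 0 (C ω))
      + mh 0 1 (C ω) * (q 0 xb (C ω) - qh 0 xb (C ω)) * (eh 1 (C ω) - e 1 (C ω))) P :=
    (ht3 0 0 (Or.inl rfl) (Or.inl rfl)).add (ht3 0 1 (Or.inl rfl) (Or.inr rfl))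
  have h3b : Integrable (fun ω => mh 0 0 (C ω) * (q 0 xb (C ω) - qh 0 xb (C ω)) * (eh 0 (C ω) - e 0 (C ω))
      + mh 0 1 (C ω) * (q 0 xb (C ω) - qh 0 xb (C ω)) * (eh 1 (C ω) - e 1 (C ω))
      + mh 1 0 (C ω) * (q 1 xb (C ω) - qh 1 xb (C ω)) * (eh 0 (C ω) - e 0 (C ω))) P :=
    h3a.add (ht3 1 0 (Or.inr rfl) (Or.inl rfl))
  have h3c : Integrable (fun ω => mh 0 0 (C ω) * (q 0 xb (C ω) - qh 0 xb (C ω)) * (eh 0 (C ω) - e 0 (C ω))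
      + mh 0 1 (C ω) * (q 0 xb (C ω) - qh 0 xb (C ω)) * (eh 1 (C ω) - e 1 (C ω))
      + mh 1 0 (C ω) * (q 1 xb (C ω) - qh 1 xb (C ω)) * (eh 0 (C ω) - e 0 (C ω))
      + mh 1 1 (C ω) * (q 1 xb (C ω) - qh 1 xb (C ω)) * (eh 1 (C ω) - e 1 (C ω))) P :=
    h3b.add (ht3 1 1 (Or.inr rfl) (Or.inr rfl))
  have hSH12 : Integrable (fun ω => ((mh 0 0 (C ω) - m 0 0 (C ω)) * (fdXi q xb 0 0 (C ω) - fdXi qh xb 0 0 (C ω))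
        * q 0 0 (C ω) * e 0 (C ω)
      + (mh 0 1 (C ω) - m 0 1 (C ω)) * (fdXi q xb 0 1 (C ω) - fdXi qh xb 0 1 (C ω))
        * q 0 1 (C ω) * e 1 (C ω)
      + (mh 1 0 (C ω) - m 1 0 (C ω)) * (fdXi q xb 1 0 (C ω) - fdXi qh xb 1 0 (C ω))
        * q 1 0 (C ω) * e 0 (C ω)
      + (mh 1 1 (C ω) - m 1 1 (C ω)) * (fdXi q xb 1 1 (C ω) - fdXi qh xb 1 1 (C ω))
        * q 1 1 (C ω) * e 1 (C ω))
      + ((fdPi eh xb 0 (C ω) - fdPi e xb 0 (C ω))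
        * (fdNu mh q eh 0 (C ω) - fdNu mh qh eh 0 (C ω)) * q 0 0 (C ω) * e 0 (C ω)
      + (fdPi eh xb 1 (C ω) - fdPi e xb 1 (C ω))
        * (fdNu mh q eh 1 (C ω) - fdNu mh qh eh 1 (C ω)) * q 0 1 (C ω) * e 1 (C ω)
      + (fdPi eh xb 0 (C ω) - fdPi e xb 0 (C ω))
        * (fdNu mh q eh 0 (C ω) - fdNu mh qh eh 0 (C ω)) * q 1 0 (C ω) * e 0 (C ω)
      + (fdPi eh xb 1 (C ω) - fdPi e xb 1 (C ω))
        * (fdNu mh q eh 1 (C ω) - fdNu mh qh eh 1 (C ω)) * q 1 1 (C ω) * e 1 (C ω))) P := hSH1.add hSH2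
  rw [stepA mh eh qh hqh_meas hqh_pos hinth, stepA m e q hq_meas hq_pos hintt,
    redHh, redHt, redH1, redH2,
    ← integral_add (ht3 0 0 (Or.inl rfl) (Or.inl rfl)) (ht3 0 1 (Or.inl rfl) (Or.inr rfl)),
    ← integral_add h3a (ht3 1 0 (Or.inr rfl) (Or.inl rfl)),
    ← integral_add h3b (ht3 1 1 (Or.inr rfl) (Or.inr rfl)),
    ← integral_add hSH1 hSH2,
    ← integral_add hSH12 h3c,
    ← integral_sub hSHh hSHt]
  refine integral_congr_ae (Filter.Eventually.of_forall fun ω => ?_)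
  have hq10' : (1:ℝ) - q 1 0 (C ω) ≠ 0 := by
    rw [← hq0 0 (C ω)]; exact hne0 (hq_pos 0 0 _ (Or.inl rfl) (Or.inl rfl)).1
  have hq11' : (1:ℝ) - q 1 1 (C ω) ≠ 0 := by
    rw [← hq0 1 (C ω)]; exact hne0 (hq_pos 0 1 _ (Or.inl rfl) (Or.inr rfl)).1
  have he1' : (1:ℝ) - e 1 (C ω) ≠ 0 := by
    rw [← he0 (C ω)]; exact hne0 (he_pos 0 _ (Or.inl rfl)).1
  exact fd_pointwise m mh e eh q qh (C ω) (he0 _) (hq0 0 _) (hq0 1 _)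
    (hne0 (he_pos 1 _ (Or.inr rfl)).1) he1'
    (hne0 (heh_pos 0 _ (Or.inl rfl)).1) (hne0 (heh_pos 1 _ (Or.inr rfl)).1)
    (hne0 (hq_pos 1 0 _ (Or.inr rfl) (Or.inl rfl)).1) hq10'
    (hne0 (hq_pos 1 1 _ (Or.inr rfl) (Or.inr rfl)).1) hq11'
    (hne0 (hqh_pos 0 0 _ (Or.inl rfl) (Or.inl rfl)).1)
    (hne0 (hqh_pos 0 1 _ (Or.inl rfl) (Or.inr rfl)).1)
    (hne0 (hqh_pos 1 0 _ (Or.inr rfl) (Or.inl rfl)).1)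
    (hne0 (hqh_pos 1 1 _ (Or.inr rfl) (Or.inr rfl)).1)
    xb hxb
end
end

section
/- Define a(c) = q(1,0,c), b(c) = q(1,1,c) − q(1,0,c), f(x,c) = m(0,x,c), g(x,c) = m(1,x,c) − m(0,x,c), and γ_g(c) = Σ_{x∈{0,1}} g(x,c)e(x,c). Then the conditional front-door contrast factorizes as τ(c) := τ₁(c) − τ₀(c) = b(c)·γ_g(c) for every c, where τ_x̄(c) = Σ_{z,x∈{0,1}} m(z,x,c)q(z,x̄,c)e(x,c). -/
noncomputable section

variable {𝒞 : Type*}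

/-- With b(c) = q(1,1,c) − q(1,0,c), g(x,c) = m(1,x,c) − m(0,x,c) and
γ_g(c) = Σ_{x∈{0,1}} g(x,c)·e(x,c), the conditional front-door contrast factorizes as
τ₁(c) − τ₀(c) = b(c)·γ_g(c) for every c. -/
theorem fd_hte_factorization
    (m q : ℝ → ℝ → 𝒞 → ℝ) (e : ℝ → 𝒞 → ℝ)
    (he0 : ∀ c, e 0 c = 1 - e 1 c)
    (hq0 : ∀ x c, (x = 0 ∨ x = 1) → q 0 x c = 1 - q 1 x c)
    (c : 𝒞) :
    fdTau m q e 1 c - fdTau m q e 0 c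
      = (q 1 1 c - q 1 0 c) *
          ((m 1 0 c - m 0 0 c) * e 0 c + (m 1 1 c - m 0 1 c) * e 1 c) := by
  simp only [fdTau, hq0 0 c (Or.inl rfl), hq0 1 c (Or.inr rfl)]
  ring
end
end

section
/- Let ê_X:𝒞→ℝ and ĝ:{0,1}×𝒞→ℝ be arbitrary bounded measurable estimates, and let ζ_{ê,ĝ}(x,c) = (1 − ê_X(c))·ĝ(0,c) + ê_X(c)·ĝ(1,c) + (x − ê_X(c))·(ĝ(1,c) − ĝ(0,c)). Then almost surely E[ζ_{ê,ĝ}(X,C) | σ(C)] − γ_g(C) = e_X(C)·(ĝ(1,C) − g(1,C)) + (1 − e_X(C))·(ĝ(0,C) − g(0,C)); in particular the error of the pseudo-g regression target does not depend on the error of ê_X. -/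
open MeasureTheory

noncomputable section

/-- **Error correction of the pseudo-g function.** For arbitrary bounded
measurable estimates ê_X, ĝ and the pseudo-g ζ_{ê,ĝ}, almost surely
E[ζ_{ê,ĝ}(X,C) | σ(C)] − γ_g(C)
  = e_X(C)·(ĝ(1,C) − g(1,C)) + (1 − e_X(C))·(ĝ(0,C) − g(0,C)):
the error does not depend on the error of ê_X. -/
theorem pseudo_g_error_correction
    {Ω 𝒞 : Type*} [MeasurableSpace Ω] [MeasurableSpace 𝒞]
    (P : Measure Ω) [IsProbabilityMeasure P]
    (C : Ω → 𝒞) (X : Ω → ℝ)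
    (hC : Measurable C) (hX : Measurable X) (hX01 : ∀ ω, X ω = 0 ∨ X ω = 1)
    (eX : 𝒞 → ℝ) (heX_meas : Measurable eX)
    (heX : (fun ω => eX (C ω)) =ᵐ[P] P[X | MeasurableSpace.comap C inferInstance])
    (g : ℝ → 𝒞 → ℝ) (hg_meas : Measurable fun p : ℝ × 𝒞 => g p.1 p.2)
    (Bg : ℝ) (hg_bdd : ∀ x c, |g x c| ≤ Bg)
    -- arbitrary bounded measurable estimates
    (eXh : 𝒞 → ℝ) (heXh_meas : Measurable eXh)
    (gh : ℝ → 𝒞 → ℝ) (hgh_meas : Measurable fun p : ℝ × 𝒞 => gh p.1 p.2)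
    (B : ℝ) (heXh_bdd : ∀ c, |eXh c| ≤ B) (hgh_bdd : ∀ x c, |gh x c| ≤ B) :
    (fun ω =>
        (P[(fun ω' => (1 - eXh (C ω')) * gh 0 (C ω') + eXh (C ω') * gh 1 (C ω')
              + (X ω' - eXh (C ω')) * (gh 1 (C ω') - gh 0 (C ω')))
            | MeasurableSpace.comap C inferInstance]) ω
          - (eX (C ω) * g 1 (C ω) + (1 - eX (C ω)) * g 0 (C ω)))
      =ᵐ[P] fun ω => eX (C ω) * (gh 1 (C ω) - g 1 (C ω))
          + (1 - eX (C ω)) * (gh 0 (C ω) - g 0 (C ω)) := by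
  classical
  have hm : MeasurableSpace.comap C inferInstance ≤ (inferInstance : MeasurableSpace Ω) :=
    hC.comap_le
  have hCm : @Measurable Ω 𝒞 (MeasurableSpace.comap C inferInstance) _ C := fun s hs => ⟨s, hs, rfl⟩
  have hgh0 : Measurable fun c => gh 0 c := hgh_meas.comp (measurable_const.prodMk measurable_id)
  have hgh1 : Measurable fun c => gh 1 c := hgh_meas.comp (measurable_const.prodMk measurable_id)
  have hXbd : ∀ ω, |X ω| ≤ 1 := by
    intro ω; rcases hX01 ω with h | h <;> rw [h] <;> norm_num
  have hint : ∀ {f : Ω → ℝ} (b : ℝ), AEStronglyMeasurable f P → (∀ ω, |f ω| ≤ b) →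
      Integrable f P := by
    intro f b hf hb
    exact (integrable_const b).mono' hf (Filter.Eventually.of_forall hb)
  set f1 : Ω → ℝ := fun ω => gh 0 (C ω) with hf1
  set f2 : Ω → ℝ := fun ω => (gh 1 (C ω) - gh 0 (C ω)) * X ω with hf2
  have hkey : (fun ω' => (1 - eXh (C ω')) * gh 0 (C ω') + eXh (C ω') * gh 1 (C ω')
      + (X ω' - eXh (C ω')) * (gh 1 (C ω') - gh 0 (C ω'))) = f1 + f2 := by
    funext ω; simp only [hf1, hf2, Pi.add_apply]; ring
  have hf1_int : Integrable f1 P :=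
    hint B (hgh0.comp hC).aestronglyMeasurable (fun ω => hgh_bdd 0 (C ω))
  have hf2_int : Integrable f2 P := by
    refine hint ((|B| + |B|) * 1)
      (((hgh1.comp hC).sub (hgh0.comp hC)).mul hX).aestronglyMeasurable (fun ω => ?_)
    rw [abs_mul]
    refine mul_le_mul ((abs_sub _ _).trans (add_le_add ((hgh_bdd 1 _).trans (le_abs_self B))
      ((hgh_bdd 0 _).trans (le_abs_self B)))) (hXbd ω) (abs_nonneg _) (by positivity)
  have hX_int : Integrable X P := hint 1 hX.aestronglyMeasurable hXbd
  have hsm1 : StronglyMeasurable[MeasurableSpace.comap C inferInstance] f1 :=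
    (hgh0.comp hCm).stronglyMeasurable
  have hsm2 : StronglyMeasurable[MeasurableSpace.comap C inferInstance]
      fun ω => gh 1 (C ω) - gh 0 (C ω) :=
    ((hgh1.comp hCm).sub (hgh0.comp hCm)).stronglyMeasurable
  have h1 : P[f1 | MeasurableSpace.comap C inferInstance] =ᵐ[P] f1 := by
    rw [condExp_of_stronglyMeasurable hm hsm1 hf1_int]
  have h2 : P[f2 | MeasurableSpace.comap C inferInstance]
      =ᵐ[P] fun ω => (gh 1 (C ω) - gh 0 (C ω)) * (P[X | MeasurableSpace.comap C inferInstance]) ω :=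
    condExp_mul_of_stronglyMeasurable_left hsm2 hf2_int hX_int
  have hadd : P[f1 + f2 | MeasurableSpace.comap C inferInstance]
      =ᵐ[P] P[f1 | MeasurableSpace.comap C inferInstance]
        + P[f2 | MeasurableSpace.comap C inferInstance] := condExp_add hf1_int hf2_int _
  rw [hkey]
  filter_upwards [hadd, h1, h2, heX] with ω hω1 hω2 hω3 hω4
  simp only [Pi.add_apply] at hω1 ⊢
  rw [hω1, hω2, hω3, ← hω4, hf1]
  ring
end
end

section
/- Let h = τ̂ − τ₀ and suppose: (a) ψ(t) := L(τ₀ + t·h, η₀) is differentiable at t = 0 with ψ′(0) ≥ 0 (first-order optimality); (b) φ(t) := L(τ₀ + t·h, η̂) is twice differentiable on [0,1] with φ″(t) ≥ λ‖h‖²_𝒯 − κ‖η̂ − η₀‖^{4/(1+r)}_𝓗 for all t ∈ (0,1) (strong convexity); (c) φ(1) − φ(0) = L(τ̂, η̂) − L(τ₀, η̂) ≤ R (excess-risk bound). Then ‖τ̂ − τ₀‖²_𝒯 ≤ (2/λ)·R + (2/λ)·(ψ′(0) − φ′(0)) + (κ/λ)·‖η̂ − η₀‖^{4/(1+r)}_𝓗.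 -/
open MeasureTheory

noncomputable section

/-- **Fast rate convergence, abstract orthogonal statistical learning.**
Let h = τ̂ − τ₀. If ψ(t) = L(τ₀ + t·h, η₀) is differentiable at 0 with ψ′(0) ≥ 0, if
φ(t) = L(τ₀ + t·h, η̂) is twice differentiable on [0,1] with
φ″(t) ≥ λ‖h‖² − κ‖η̂−η₀‖^{4/(1+r)} on (0,1), and if φ(1) − φ(0) ≤ R, then
‖τ̂ − τ₀‖² ≤ (2/λ)·R + (2/λ)·(ψ′(0) − φ′(0)) + (κ/λ)·‖η̂−η₀‖^{4/(1+r)}. -/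
theorem fast_rate_convergence
    {𝒯 𝓗 : Type*} [NormedAddCommGroup 𝒯] [NormedSpace ℝ 𝒯] [NormedAddCommGroup 𝓗]
    (L : 𝒯 → 𝓗 → ℝ) (τ₀ τh : 𝒯) (η₀ ηh : 𝓗)
    (lam κ r R : ℝ) (hlam : 0 < lam) (hκ : 0 ≤ κ) (hr0 : 0 ≤ r) (hr1 : r < 1) (hR : 0 ≤ R)
    (ψd : ℝ) (φ' φ'' : ℝ → ℝ)
    -- (a) first-order optimality at the truth
    (hψ : HasDerivAt (fun t : ℝ => L (τ₀ + t • (τh - τ₀)) η₀) ψd 0)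
    (hψd : 0 ≤ ψd)
    -- (b) twice differentiability on [0,1] and strong convexity on (0,1)
    (hφ1 : ∀ t ∈ Set.Icc (0 : ℝ) 1,
      HasDerivAt (fun s : ℝ => L (τ₀ + s • (τh - τ₀)) ηh) (φ' t) t)
    (hφ2 : ∀ t ∈ Set.Icc (0 : ℝ) 1, HasDerivAt φ' (φ'' t) t)
    (hconv : ∀ t ∈ Set.Ioo (0 : ℝ) 1,
      lam * ‖τh - τ₀‖ ^ 2 - κ * ‖ηh - η₀‖ ^ ((4 : ℝ) / (1 + r)) ≤ φ'' t)
    -- (c) excess-risk bound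
    (hexc : L τh ηh - L τ₀ ηh ≤ R) :
    ‖τh - τ₀‖ ^ 2
      ≤ (2 / lam) * R + (2 / lam) * (ψd - φ' 0)
        + (κ / lam) * ‖ηh - η₀‖ ^ ((4 : ℝ) / (1 + r)) := by

  set K : ℝ := ‖ηh - η₀‖ ^ ((4 : ℝ) / (1 + r)) with hK
  set c : ℝ := lam * ‖τh - τ₀‖ ^ 2 - κ * K with hc
  set F : ℝ → ℝ := fun s : ℝ => L (τ₀ + s • (τh - τ₀)) ηh with hFdef
  -- G' t = φ' t - φ' 0 - c * t  is monotone on [0,1]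
  have hG'deriv : ∀ t ∈ Set.Icc (0 : ℝ) 1,
      HasDerivAt (fun t => φ' t - φ' 0 - c * t) (φ'' t - c) t := by
    intro t ht
    have h1 : HasDerivAt (fun t => φ' t - φ' 0 - c * t) (φ'' t - c * 1) t := ((hφ2 t ht).sub_const (φ' 0)).sub ((hasDerivAt_id t).const_mul c)
    simpa using h1
  have hG'mono : MonotoneOn (fun t => φ' t - φ' 0 - c * t) (Set.Icc 0 1) := by
    apply monotoneOn_of_deriv_nonneg (convex_Icc 0 1)
    · exact fun t ht => ((hG'deriv t ht).continuousAt).continuousWithinAt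
    · intro t ht
      rw [interior_Icc] at ht
      exact ((hG'deriv t (Set.mem_Icc_of_Ioo ht)).differentiableAt).differentiableWithinAt
    · intro t ht
      rw [interior_Icc] at ht
      rw [(hG'deriv t (Set.mem_Icc_of_Ioo ht)).deriv]
      have := hconv t ht
      simp only [hc]
      linarith
  -- G t = F t - F 0 - φ' 0 * t - c/2 * t^2 is monotone on [0,1]
  have hGderiv : ∀ t ∈ Set.Icc (0 : ℝ) 1,
      HasDerivAt (fun t => F t - F 0 - φ' 0 * t - c / 2 * t ^ 2)
        (φ' t - φ' 0 - c * t) t := by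
    intro t ht
    have h1 : HasDerivAt (fun t => F t - F 0 - φ' 0 * t - c / 2 * t ^ 2)
        (φ' t - φ' 0 * 1 - c / 2 * (((2 : ℕ) : ℝ) * t ^ (2 - 1))) t := (((hφ1 t ht).sub_const (F 0)).sub ((hasDerivAt_id t).const_mul (φ' 0))).sub
      (((hasDerivAt_pow 2 t)).const_mul (c / 2))
    convert h1 using 1
    ring
  have hGmono : MonotoneOn (fun t => F t - F 0 - φ' 0 * t - c / 2 * t ^ 2)
      (Set.Icc 0 1) := by
    apply monotoneOn_of_deriv_nonneg (convex_Icc 0 1)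
    · exact fun t ht => ((hGderiv t ht).continuousAt).continuousWithinAt
    · intro t ht
      rw [interior_Icc] at ht
      exact ((hGderiv t (Set.mem_Icc_of_Ioo ht)).differentiableAt).differentiableWithinAt
    · intro t ht
      rw [interior_Icc] at ht
      rw [(hGderiv t (Set.mem_Icc_of_Ioo ht)).deriv]
      have h0 : (fun t => φ' t - φ' 0 - c * t) 0 ≤ (fun t => φ' t - φ' 0 - c * t) t :=
        hG'mono (by simp) (Set.mem_Icc_of_Ioo ht) (le_of_lt ht.1)
      simpa using h0
  have hG01 : (fun t => F t - F 0 - φ' 0 * t - c / 2 * t ^ 2) 0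
      ≤ (fun t => F t - F 0 - φ' 0 * t - c / 2 * t ^ 2) 1 :=
    hGmono (by simp) (by simp) zero_le_one
  simp only at hG01
  have hF1 : F 1 = L τh ηh := by simp [hFdef]
  have hF0 : F 0 = L τ₀ ηh := by simp [hFdef]
  -- combine: c/2 + φ' 0 ≤ F 1 - F 0 ≤ R
  have hkey : c ≤ 2 * R + 2 * (ψd - φ' 0) := by
    have hFR : F 1 - F 0 ≤ R := by rw [hF1, hF0]; exact hexc
    nlinarith [hG01, hψd]
  have hfinal : ‖τh - τ₀‖ ^ 2 ≤ (2 * R + 2 * (ψd - φ' 0) + κ * K) / lam := by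
    rw [le_div_iff₀ hlam]
    have hcK : lam * ‖τh - τ₀‖ ^ 2 = c + κ * K := by rw [hc]; ring
    nlinarith [hkey]
  calc ‖τh - τ₀‖ ^ 2 ≤ (2 * R + 2 * (ψd - φ' 0) + κ * K) / lam := hfinal
    _ = (2 / lam) * R + (2 / lam) * (ψd - φ' 0) + (κ / lam) * K := by ring
end
end
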